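/- arXiv:1409.7904 — 11 statements merged into one kernel-verified Lean document; each statement's English description precedes it below -/
import Mathlib

section
/- A ring R is periodic if and only if for every a ∈ R there exists m ≥ 2 such that a - a^m is nilpotent. -/
open Polynomial Finset

lemma periodic_torsion {S : Type*} [CommRing S] {N : ℕ} (hN : 0 < N) (hNS : (N : S) = 0)
    {z : S} {kz : ℕ} (hz : z ^ kz = 0) : ∃ D : ℕ, 0 < D ∧ (1 - z) ^ D = 1 := by
  haveI : NeZero N := ⟨hN.ne'⟩
  -- pigeonhole on truncated coefficient vectors
  obtain ⟨p, q, hpq, hf⟩ := Finite.exists_ne_map_eq_of_infinite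
    (fun j : ℕ => fun i : Fin kz => ((((1 - X : ℤ[X]) ^ j).coeff i : ℤ) : ZMod N))
  -- evaluation agreement
  have heval : ∀ j j' : ℕ,
      (∀ i : Fin kz, ((((1 - X : ℤ[X]) ^ j).coeff i : ℤ) : ZMod N)
        = ((((1 - X : ℤ[X]) ^ j').coeff i : ℤ) : ZMod N)) →
      (1 - z) ^ j = (1 - z) ^ j' := by
    intro j j' hcoeff
    have hdeg : ∀ l : ℕ, l ≤ j + j' → ((1 - X : ℤ[X]) ^ l).natDegree < j + j' + kz + 1 := by
      intro l hl
      have h1 : ((1 - X : ℤ[X])).natDegree ≤ 1 :=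
        le_trans (natDegree_sub_le _ _) (by simp)
      calc ((1 - X : ℤ[X]) ^ l).natDegree ≤ l * (1 - X : ℤ[X]).natDegree :=
            natDegree_pow_le
        _ ≤ l * 1 := Nat.mul_le_mul_left l h1
        _ < j + j' + kz + 1 := by omega
    have hz' : ∀ i : ℕ, kz ≤ i → z ^ i = 0 := by
      intro i hi
      rw [← Nat.sub_add_cancel hi, pow_add, hz, mul_zero]
    have key : ∀ l : ℕ, l ≤ j + j' → (1 - z) ^ l =
        ∑ i ∈ range (j + j' + kz + 1), ((1 - X : ℤ[X]) ^ l).coeff i • z ^ i := by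
      intro l hl
      have h := aeval_eq_sum_range' (R := ℤ) (hdeg l hl) z
      have h2 : (aeval z) ((1 - X : ℤ[X]) ^ l) = (1 - z) ^ l := by simp
      rw [← h2, h]
    rw [key j (by omega), key j' (by omega)]
    apply Finset.sum_congr rfl
    intro i _
    by_cases hik : i < kz
    · have hcast := hcoeff ⟨i, hik⟩
      have hdvd : (N : ℤ) ∣ ((1 - X : ℤ[X]) ^ j').coeff i - ((1 - X : ℤ[X]) ^ j).coeff i :=
        (ZMod.intCast_eq_intCast_iff_dvd_sub _ _ _).mp hcast
      obtain ⟨d, hd⟩ := hdvd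
      have hNz : ((N : ℤ) * d) • z ^ i = 0 := by
        rw [mul_smul, zsmul_eq_mul]
        push_cast
        rw [hNS]
        simp
      have : ((1 - X : ℤ[X]) ^ j').coeff i • z ^ i - ((1 - X : ℤ[X]) ^ j).coeff i • z ^ i = 0 := by
        rw [← sub_smul, hd, hNz]
      exact (sub_eq_zero.mp this).symm
    · have : z ^ i = 0 := hz' i (by omega)
      rw [this, smul_zero, smul_zero]
  -- conclude from pigeonhole equality
  rcases Nat.lt_or_ge p q with h | h
  · have heq := heval p q (fun i => congrFun hf i)
    have hu : IsUnit ((1 - z) ^ p) := (IsNilpotent.isUnit_one_sub ⟨kz, hz⟩).pow p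
    refine ⟨q - p, by omega, ?_⟩
    have : (1 - z) ^ p * (1 - z) ^ (q - p) = (1 - z) ^ p * 1 := by
      rw [mul_one, ← pow_add]
      rw [show p + (q - p) = q by omega]
      exact heq.symm
    exact hu.mul_left_cancel this
  · have hpq' : q < p := by omega
    have heq := heval q p (fun i => (congrFun hf i).symm)
    have hu : IsUnit ((1 - z) ^ q) := (IsNilpotent.isUnit_one_sub ⟨kz, hz⟩).pow q
    refine ⟨p - q, by omega, ?_⟩
    have : (1 - z) ^ q * (1 - z) ^ (p - q) = (1 - z) ^ q * 1 := by
      rw [mul_one, ← pow_add]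
      rw [show q + (p - q) = p by omega]
      exact heq.symm
    exact hu.mul_left_cancel this

lemma periodic_key {S : Type*} [CommRing S]
    (H : ∀ b : S, ∃ m : ℕ, 2 ≤ m ∧ IsNilpotent (b - b ^ m)) (a : S) :
    ∃ p q : ℕ, p ≠ q ∧ a ^ p = a ^ q := by
  -- positive characteristic
  obtain ⟨m₂, hm₂, k₂, h₂⟩ := H (2 : S)
  have h2S : ((2 - 2 ^ m₂ : ℤ) : S) = (2 : S) - (2 : S) ^ m₂ := by push_cast; ring
  have hzint : (((2 - 2 ^ m₂ : ℤ) ^ k₂ : ℤ) : S) = 0 := by push_cast [h2S] at *; exact_mod_cast h₂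
  have hne : (2 - 2 ^ m₂ : ℤ) ≠ 0 := by
    have : (4 : ℤ) ≤ 2 ^ m₂ := by
      calc (4 : ℤ) = 2 ^ 2 := by norm_num
      _ ≤ 2 ^ m₂ := pow_le_pow_right₀ (by norm_num) hm₂
    omega
  set zint : ℤ := (2 - 2 ^ m₂) ^ k₂ with hzintdef
  have hzne : zint ≠ 0 := pow_ne_zero _ hne
  set N : ℕ := zint.natAbs with hNdef
  have hNpos : 0 < N := Int.natAbs_pos.mpr hzne
  have hNS : (N : S) = 0 := by
    have : ((N : ℤ) : S) = 0 := by
      rcases Int.natAbs_eq zint with h | h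
      · rw [← h]; exact hzint
      · have : (N : ℤ) = -zint := by omega
        rw [this]; push_cast [hzint]; ring
    exact_mod_cast this
  -- main construction
  obtain ⟨m, hm, k0, hx0⟩ := H a
  set K := k0 + 1 with hKdef
  have hx : (a - a ^ m) ^ K = 0 := by rw [pow_succ, hx0, zero_mul]
  have hfac : a - a ^ m = a * (1 - a ^ (m - 1)) := by
    have : a * a ^ (m - 1) = a ^ m := by
      rw [← pow_succ']
      congr 1
      omega
    rw [mul_sub, mul_one, this]
  set c := 1 - a ^ (m - 1) with hcdef
  set g := ∑ i ∈ Finset.range K, c ^ i with hgdef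
  have hgeom : c ^ K = 1 - a ^ (m - 1) * g := by
    have := geom_sum_mul c K
    rw [hcdef] at this ⊢
    linear_combination -this
  have hKc : a ^ K * c ^ K = 0 := by
    rw [← mul_pow, ← hfac, hx]
  set t := a ^ (m - 2) * g with htdef
  have hKt : a ^ K = a ^ (K + 1) * t := by
    have hm1 : a ^ (m - 1) = a ^ (m - 2) * a := by
      rw [← pow_succ]; congr 1; omega
    rw [hgeom, hm1] at hKc
    rw [htdef]
    linear_combination hKc
  have hKj : ∀ j : ℕ, a ^ K = a ^ (K + j) * t ^ j := by
    intro j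
    induction j with
    | zero => simp
    | succ j ih =>
      calc a ^ K = a ^ (K + 1) * t := hKt
        _ = (a ^ (K + j) * t ^ j) * a * t := by rw [← ih]; ring
        _ = a ^ (K + (j + 1)) * t ^ (j + 1) := by ring
  set e := a ^ K * t ^ K with hedef
  have he : e * e = e := by
    rw [hedef]
    linear_combination (-(t^K)) * hKj K
  have hae : a ^ K * e = a ^ K := by
    rw [hedef]
    linear_combination (-1 : S) * hKj K
  set u := a * e + (1 - e) with hudef
  have hu : ∀ j : ℕ, u ^ j = a ^ j * e + (1 - e) := by
    intro j
    induction j with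
    | zero => simp
    | succ j ih =>
      rw [pow_succ, ih, hudef]
      linear_combination (a ^ (j + 1) - a ^ j - a + 1) * he
  set v := a ^ K * t ^ (K + 1) * e + (1 - e) with hvdef
  have huv : u * v = 1 := by
    rw [hudef, hvdef]
    linear_combination (a ^ (K + 1) * t ^ (K + 1) - a - a ^ K * t ^ (K + 1) + 2) * he +
      (-(t ^ K * e)) * hKt + (-e) * hedef
  obtain ⟨m', hm', k1, hz1⟩ := H u
  set z := 1 - u ^ (m' - 1) with hzdef
  have huz : u - u ^ m' = u * z := by
    rw [hzdef, mul_sub, mul_one, ← pow_succ']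
    congr 2
    omega
  have hznil : z ^ k1 = 0 := by
    have h1 : z ^ k1 = v ^ k1 * ((u - u ^ m') ^ k1) := by
      rw [huz, mul_pow, ← mul_assoc, ← mul_pow, mul_comm v u, huv, one_pow, one_mul]
    rw [h1, hz1, mul_zero]
  obtain ⟨D, hD, hzD⟩ := periodic_torsion hNpos hNS hznil
  have huD : u ^ ((m' - 1) * D) = 1 := by
    have : (1 - z) = u ^ (m' - 1) := by rw [hzdef]; ring
    rw [pow_mul, ← this, hzD]
  set D' := (m' - 1) * D with hD'def
  have hD'pos : 0 < D' := Nat.mul_pos (by omega) hD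
  have haD : a ^ D' * e = e := by
    have h1 := hu D'
    rw [huD] at h1
    linear_combination -h1
  refine ⟨K + D', K, by omega, ?_⟩
  calc a ^ (K + D') = a ^ K * a ^ D' := by rw [pow_add]
    _ = (a ^ K * e) * a ^ D' := by rw [hae]
    _ = a ^ K * (a ^ D' * e) := by ring
    _ = a ^ K * e := by rw [haD]
    _ = a ^ K := hae

/-- A ring is periodic if every element satisfies `a ^ m = a ^ n` for distinct `m, n`. -/
def IsPeriodicRing (R : Type*) [Ring R] : Prop :=
  ∀ a : R, ∃ m n : ℕ, m ≠ n ∧ a ^ m = a ^ n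

theorem isPeriodicRing_iff_sub_pow_nilpotent (R : Type*) [Ring R] :
    IsPeriodicRing R ↔ ∀ a : R, ∃ m : ℕ, 2 ≤ m ∧ IsNilpotent (a - a ^ m) := by
  rw [IsPeriodicRing]
  constructor
  · intro H a
    have key : ∀ m n : ℕ, m < n → a ^ m = a ^ n →
        (a - a ^ (n - m + 1)) ^ (m + 1) = 0 := by
      intro m n hmn h
      set d := n - m with hd
      have h1 : a - a ^ (d + 1) = a * (1 - a ^ d) := by
        rw [mul_sub, mul_one, ← pow_succ']
      have hc : Commute a (1 - a ^ d) :=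
        (Commute.one_right a).sub_right ((Commute.refl a).pow_right d)
      have h2 : a ^ (m + 1) * (1 - a ^ d) = 0 := by
        rw [mul_sub, mul_one, ← pow_add]
        have hmd : m + 1 + d = n + 1 := by omega
        rw [hmd, pow_succ', pow_succ', h, sub_self]
      calc (a - a ^ (d + 1)) ^ (m + 1) = a ^ (m + 1) * (1 - a ^ d) ^ (m + 1) := by
            rw [h1, hc.mul_pow]
        _ = (a ^ (m + 1) * (1 - a ^ d)) * (1 - a ^ d) ^ m := by
            rw [pow_succ' (1 - a ^ d) m, mul_assoc]
        _ = 0 := by rw [h2, zero_mul]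
    obtain ⟨m, n, hmn, h⟩ := H a
    rcases Nat.lt_or_ge m n with hlt | hge
    · exact ⟨n - m + 1, by omega, m + 1, key m n hlt h⟩
    · have hlt : n < m := by omega
      exact ⟨m - n + 1, by omega, n + 1, key n m hlt h.symm⟩
  · intro H a
    set S := Subring.closure ({a} : Set R) with hSdef
    letI : CommRing S := Subring.closureCommRingOfComm (by
      intro x hx y hy
      rw [Set.mem_singleton_iff] at hx hy
      rw [hx, hy])
    have coe_pow : ∀ (x : S) (n : ℕ), ((x ^ n : S) : R) = (x : R) ^ n := by
      intro x n
      induction n with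
      | zero => simp [pow_zero]
      | succ n ih => rw [pow_succ, pow_succ, ← ih]; rfl
    have coe_sub : ∀ (x y : S), ((x - y : S) : R) = (x : R) - (y : R) := fun _ _ => rfl
    have H' : ∀ b : S, ∃ m : ℕ, 2 ≤ m ∧ IsNilpotent (b - b ^ m) := by
      intro b
      obtain ⟨m, hm, k, hk⟩ := H (b : R)
      refine ⟨m, hm, k, ?_⟩
      have : (((b - b ^ m) ^ k : S) : R) = ((b : R) - (b : R) ^ m) ^ k := by
        rw [coe_pow, coe_sub, coe_pow]
      apply Subtype.ext
      rw [this, hk]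
      rfl
    obtain ⟨p, q, hpq, hE⟩ := periodic_key H' ⟨a, Subring.subset_closure rfl⟩
    refine ⟨p, q, hpq, ?_⟩
    have := congrArg (fun x : S => (x : R)) hE
    simpa [coe_pow] using this
end

section
/- A ring R is periodic if and only if for any two elements a, b ∈ R there exists a single n ∈ ℕ with n ≥ 2 such that both a - a^n and b - b^n are nilpotent. -/
private lemma binom1 {S : Type*} [CommRing S] (u : S) :
    ∀ k : ℕ, ∃ g, (1 - u) ^ k = 1 - u * g
  | 0 => ⟨0, by simp⟩
  | (k+1) => by
      obtain ⟨g, hg⟩ := binom1 u k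
      exact ⟨1 + g - g * u, by rw [pow_succ, hg]; ring⟩

private lemma binom2 {S : Type*} [CommRing S] (μ : S) :
    ∀ c : ℕ, ∃ r, (1 - μ) ^ c = 1 - (c : S) * μ + μ ^ 2 * r
  | 0 => ⟨0, by simp⟩
  | (c+1) => by
      obtain ⟨r, hr⟩ := binom2 μ c
      refine ⟨(c : S) + r - μ * r, ?_⟩
      rw [pow_succ, hr]
      push_cast
      ring

private lemma chacron_comm {S : Type*} [CommRing S]
    (hS : ∀ s : S, ∃ n : ℕ, 2 ≤ n ∧ ∃ k : ℕ, (s - s ^ n) ^ k = 0) (x : S) :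
    ∃ m n : ℕ, m ≠ n ∧ x ^ m = x ^ n := by
  have triv : (1 : S) = 0 → ∃ m n : ℕ, m ≠ n ∧ x ^ m = x ^ n := fun h1 => by
    have : Subsingleton S := subsingleton_of_zero_eq_one h1.symm
    exact ⟨0, 1, by norm_num, Subsingleton.elim _ _⟩
  -- torsion from the element 2
  obtain ⟨n₂, hn₂, k₂, h2⟩ := hS 2
  rcases Nat.eq_zero_or_pos k₂ with hk₂ | hk₂
  · exact triv (by simpa [hk₂] using h2)
  have h4 : 4 ≤ 2 ^ n₂ := by
    calc (4:ℕ) = 2 ^ 2 := by norm_num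
    _ ≤ 2 ^ n₂ := Nat.pow_le_pow_right (by norm_num) hn₂
  set c : ℕ := (2 ^ n₂ - 2) ^ k₂ with hcdef
  have hc1 : 1 ≤ c := Nat.one_le_pow _ _ (by omega)
  obtain ⟨c', hcc⟩ : ∃ c', c = c' + 1 := ⟨c - 1, by omega⟩
  have hcS : (c : S) = 0 := by
    have hcast : ((2 ^ n₂ - 2 : ℕ) : S) = -((2 : S) - 2 ^ n₂) := by
      have h5 : ((2 ^ n₂ - 2 : ℕ) : S) = ((2 ^ n₂ : ℕ) : S) - ((2 : ℕ) : S) :=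
        Nat.cast_sub (by omega)
      rw [h5]; push_cast; ring
    calc (c : S) = ((2 ^ n₂ - 2 : ℕ) : S) ^ k₂ := by rw [hcdef, Nat.cast_pow]
      _ = (-((2 : S) - 2 ^ n₂)) ^ k₂ := by rw [hcast]
      _ = (-1) ^ k₂ * ((2 : S) - 2 ^ n₂) ^ k₂ := by rw [neg_pow]
      _ = 0 := by rw [h2, mul_zero]
  -- main setup
  obtain ⟨N, hN2, k, hk⟩ := hS x
  rcases Nat.eq_zero_or_pos k with hk0 | hkpos
  · exact triv (by simpa [hk0] using hk)
  obtain ⟨q, rfl⟩ : ∃ q, N = q + 2 := ⟨N - 2, by omega⟩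
  obtain ⟨k', rfl⟩ : ∃ k', k = k' + 1 := ⟨k - 1, by omega⟩
  obtain ⟨g, hg⟩ := binom1 (x ^ (q + 1)) (k' + 1)
  have hsplit : x - x ^ (q + 2) = x * (1 - x ^ (q + 1)) := by
    rw [mul_sub, mul_one, ← pow_succ']
  have hxk : x ^ (k' + 1) = x ^ (k' + 1) * (x ^ (q + 1) * g) := by
    have h0 : x ^ (k' + 1) * (1 - x ^ (q + 1) * g) = 0 := by
      rw [← hg, ← mul_pow, ← hsplit]; exact hk
    rw [mul_sub, mul_one] at h0
    exact sub_eq_zero.mp h0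
  set b : S := x ^ (q + 1) * g with hbdef
  set w : S := x ^ q * g with hwdef
  have hbw : b = x * w := by rw [hbdef, hwdef, ← mul_assoc, ← pow_succ']
  have hxkb : ∀ j : ℕ, x ^ (k' + 1) = x ^ (k' + 1) * b ^ j := by
    intro j
    induction j with
    | zero => simp
    | succ j ih => rw [pow_succ b j, ← mul_assoc, ← ih]; exact hxk
  have hbk : b ^ (k' + 1) = b ^ (k' + 1) * b := by
    calc b ^ (k' + 1) = x ^ (k' + 1) * w ^ (k' + 1) := by rw [hbw]; exact mul_pow x w _
      _ = (x ^ (k' + 1) * b) * w ^ (k' + 1) := by rw [← hxk]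
      _ = (x ^ (k' + 1) * w ^ (k' + 1)) * b := by ring
      _ = b ^ (k' + 1) * b := by rw [← mul_pow, ← hbw]
  have hbkj : ∀ j : ℕ, b ^ (k' + 1) * b ^ j = b ^ (k' + 1) := by
    intro j; induction j with
    | zero => simp
    | succ j ih => rw [pow_succ b j, ← mul_assoc, ih, ← hbk]
  set e : S := b ^ (k' + 1) with hedef
  have hee : e * e = e := hbkj (k' + 1)
  have he_pow : ∀ t : ℕ, e ^ (t + 1) = e := by
    intro t; induction t with
    | zero => exact pow_one e
    | succ t ih => rw [pow_succ, ih, hee]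
  have hxke : x ^ (k' + 1) * e = x ^ (k' + 1) := (hxkb (k' + 1)).symm
  set y : S := x * e with hydef
  have hye : y * e = y := by rw [hydef, mul_assoc, hee]
  have hyz : y * (x ^ k' * w ^ (k' + 1) * e) = e := by
    calc y * (x ^ k' * w ^ (k' + 1) * e)
        = (x * x ^ k') * w ^ (k' + 1) * (e * e) := by rw [hydef]; ring
      _ = x ^ (k' + 1) * w ^ (k' + 1) * e := by rw [← pow_succ', hee]
      _ = b ^ (k' + 1) * e := by rw [← mul_pow, ← hbw]
      _ = e * e := by rw [← hedef]
      _ = e := hee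
  obtain ⟨m, hm2, j, hj⟩ := hS y
  rcases Nat.eq_zero_or_pos j with hj0 | hjpos
  · exact triv (by simpa [hj0] using hj)
  obtain ⟨j', rfl⟩ : ∃ j', j = j' + 1 := ⟨j - 1, by omega⟩
  obtain ⟨m', rfl⟩ : ∃ m', m = m' + 2 := ⟨m - 2, by omega⟩
  set ν : S := e - y ^ (m' + 1) with hνdef
  have hyme : y ^ (m' + 1) * e = y ^ (m' + 1) := by
    rw [pow_succ, mul_assoc, hye]
  have heν : e * ν = ν := by
    rw [hνdef, mul_sub, hee, mul_comm e (y ^ (m' + 1)), hyme]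
  have hymν : y - y ^ (m' + 2) = y * ν := by
    rw [hνdef, mul_sub, hye, ← pow_succ']
  have hνj : ν ^ (j' + 1) = 0 := by
    have h1 : y ^ (j' + 1) * ν ^ (j' + 1) = 0 := by
      rw [← mul_pow, ← hymν]; exact hj
    have hstep : e * ν ^ (j' + 1) = ν ^ (j' + 1) := by
      calc e * ν ^ (j' + 1) = (e * ν) * ν ^ j' := by rw [pow_succ' ν j']; ring
        _ = ν ^ (j' + 1) := by rw [heν, ← pow_succ']
    calc ν ^ (j' + 1) = e * ν ^ (j' + 1) := hstep.symm
      _ = e ^ (j' + 1) * ν ^ (j' + 1) := by rw [he_pow]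
      _ = (y * (x ^ k' * w ^ (k' + 1) * e)) ^ (j' + 1) * ν ^ (j' + 1) := by rw [hyz]
      _ = (x ^ k' * w ^ (k' + 1) * e) ^ (j' + 1) * (y ^ (j' + 1) * ν ^ (j' + 1)) := by
          rw [mul_pow]; ring
      _ = 0 := by rw [h1, mul_zero]
  -- unipotent part
  have hkey : ∀ s : ℕ, ∃ E : ℕ, 1 ≤ E ∧ ∃ μ : S,
      (e - ν) ^ E = e - μ ∧ e * μ = μ ∧ ∃ d : S, μ = ν ^ (2 ^ s) * d := by
    intro s; induction s with
    | zero => exact ⟨1, le_refl 1, ν, by rw [pow_one], heν, 1, by norm_num⟩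
    | succ s ih =>
      obtain ⟨E, hE1, μ, hEμ, heμ, d, hμd⟩ := ih
      obtain ⟨r, hr⟩ := binom2 μ c
      refine ⟨E * c, Nat.mul_pos hE1 hc1, -(μ ^ 2 * r), ?_, ?_, ?_⟩
      · rw [pow_mul, hEμ]
        have h5 : e - μ = e * (1 - μ) := by linear_combination heμ
        rw [h5, mul_pow, hr, hcS, hcc, he_pow]
        linear_combination (μ * r) * heμ
      · linear_combination (-(μ * r)) * heμ
      · exact ⟨-(d ^ 2 * r), by rw [hμd, pow_succ 2 s, pow_mul]; ring⟩
  obtain ⟨E, hE1, μ, hEμ, -, d, hμd⟩ := hkey (j' + 1)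
  have hμ0 : μ = 0 := by
    have hle : j' + 1 ≤ 2 ^ (j' + 1) := Nat.le_of_lt Nat.lt_two_pow_self
    obtain ⟨i, hi⟩ := Nat.exists_eq_add_of_le hle
    rw [hμd, hi, pow_add, hνj, zero_mul, zero_mul]
  rw [hμ0, sub_zero] at hEμ
  have hfac : y ^ (m' + 1) = e - ν := by rw [hνdef]; ring
  have hfin : y ^ ((m' + 1) * E) = e := by rw [pow_mul, hfac, hEμ]
  have hyM : ∀ i : ℕ, y ^ (k' + 1 + i) = x ^ (k' + 1 + i) := by
    intro i
    have he2 : e ^ (k' + 1 + i) = e := by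
      rw [show k' + 1 + i = (k' + i) + 1 by omega]; exact he_pow _
    have hx2 : x ^ (k' + 1 + i) * e = x ^ (k' + 1 + i) := by
      calc x ^ (k' + 1 + i) * e = x ^ i * (x ^ (k' + 1) * e) := by rw [pow_add]; ring
        _ = x ^ i * x ^ (k' + 1) := by rw [hxke]
        _ = x ^ (k' + 1 + i) := by rw [← pow_add, show i + (k' + 1) = k' + 1 + i by omega]
    calc y ^ (k' + 1 + i) = x ^ (k' + 1 + i) * e ^ (k' + 1 + i) := by rw [hydef, mul_pow]
      _ = x ^ (k' + 1 + i) * e := by rw [he2]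
      _ = x ^ (k' + 1 + i) := hx2
  refine ⟨k' + 1 + (m' + 1) * E, k' + 1, ?_, ?_⟩
  · have : 0 < (m' + 1) * E := Nat.mul_pos (by omega) hE1
    omega
  · calc x ^ (k' + 1 + (m' + 1) * E) = y ^ (k' + 1 + (m' + 1) * E) := (hyM _).symm
      _ = y ^ (k' + 1) * y ^ ((m' + 1) * E) := by rw [pow_add]
      _ = y ^ (k' + 1) * e := by rw [hfin]
      _ = x ^ (k' + 1) * e := by
          have h6 := hyM 0
          simp only [Nat.add_zero] at h6
          rw [h6]
      _ = x ^ (k' + 1) := hxke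

private lemma exists_period {R : Type*} [Ring R] (h : IsPeriodicRing R) (a : R) :
    ∃ p d : ℕ, 0 < d ∧ a ^ p = a ^ (p + d) := by
  obtain ⟨m, n, hmn, h'⟩ := h a
  rcases Nat.lt_or_ge m n with hlt | hge
  · exact ⟨m, n - m, by omega, by rw [show m + (n - m) = n by omega]; exact h'⟩
  · have hlt : n < m := by omega
    exact ⟨n, m - n, by omega, by rw [show n + (m - n) = m by omega]; exact h'.symm⟩

private lemma periodic_pow_mul {R : Type*} [Ring R] (a : R) (p d : ℕ)
    (h : a ^ p = a ^ (p + d)) : ∀ t : ℕ, a ^ p = a ^ (p + d * t) := by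
  intro t; induction t with
  | zero => simp
  | succ t ih =>
    rw [show p + d * (t + 1) = (p + d * t) + d by ring, pow_add, ← ih, ← pow_add]
    exact h

private lemma nil_of_period {R : Type*} [Ring R] (a : R) (p d D : ℕ) (hD : 0 < D)
    (hdD : d ∣ D) (h : a ^ p = a ^ (p + d)) : IsNilpotent (a - a ^ (D + 1)) := by
  obtain ⟨t, rfl⟩ := hdD
  have hper : a ^ p = a ^ (p + d * t) := periodic_pow_mul a p d h t
  refine ⟨p + 1, ?_⟩
  have hcomm : Commute a (1 - a ^ (d * t)) :=
    (Commute.one_right a).sub_right ((Commute.refl a).pow_right _)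
  have hsplit : a - a ^ (d * t + 1) = a * (1 - a ^ (d * t)) := by
    rw [mul_sub, mul_one, ← pow_succ']
  have hzero : a ^ (p + 1) * (1 - a ^ (d * t)) = 0 := by
    rw [mul_sub, mul_one, ← pow_add, sub_eq_zero]
    calc a ^ (p + 1) = a ^ p * a := pow_succ a p
      _ = a ^ (p + d * t) * a := by rw [hper]
      _ = a ^ (p + d * t + 1) := (pow_succ a _).symm
      _ = a ^ (p + 1 + d * t) := by rw [show p + d * t + 1 = p + 1 + d * t by ring]
  calc (a - a ^ (d * t + 1)) ^ (p + 1)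
      = (a * (1 - a ^ (d * t))) ^ (p + 1) := by rw [hsplit]
    _ = a ^ (p + 1) * (1 - a ^ (d * t)) ^ (p + 1) := hcomm.mul_pow _
    _ = a ^ (p + 1) * ((1 - a ^ (d * t)) * (1 - a ^ (d * t)) ^ p) := by
        rw [pow_succ' (1 - a ^ (d * t)) p]
    _ = (a ^ (p + 1) * (1 - a ^ (d * t))) * (1 - a ^ (d * t)) ^ p := by rw [mul_assoc]
    _ = 0 := by rw [hzero, zero_mul]

theorem isPeriodicRing_iff_pair_nilpotent (R : Type*) [Ring R] :
    IsPeriodicRing R ↔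
      ∀ a b : R, ∃ n : ℕ, 2 ≤ n ∧ IsNilpotent (a - a ^ n) ∧ IsNilpotent (b - b ^ n) := by
  constructor
  · intro h a b
    obtain ⟨pa, da, hda, ha⟩ := exists_period h a
    obtain ⟨pb, db, hdb, hb⟩ := exists_period h b
    have hD : 0 < da * db := Nat.mul_pos hda hdb
    refine ⟨da * db + 1, by omega, ?_, ?_⟩
    · exact nil_of_period a pa da (da * db) hD ⟨db, rfl⟩ ha
    · exact nil_of_period b pb db (da * db) hD ⟨da, mul_comm da db⟩ hb
  · intro h x
    set T : Subring R := Subring.centralizer {x} with hT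
    set S : Subring R := Subring.centralizer (T : Set R) with hSdef
    have hxT : x ∈ T := by
      rw [hT, Subring.mem_centralizer_iff]
      rintro g hg
      rw [Set.mem_singleton_iff] at hg
      subst hg; rfl
    have hST : ∀ z : R, z ∈ S → z ∈ T := by
      intro z hz
      rw [hSdef, Subring.mem_centralizer_iff] at hz
      rw [hT, Subring.mem_centralizer_iff]
      rintro g hg
      rw [Set.mem_singleton_iff] at hg
      subst hg
      exact hz g hxT
    have hxS : x ∈ S := by
      rw [hSdef, Subring.mem_centralizer_iff]
      intro g hg
      have hg' : g ∈ Subring.centralizer ({x} : Set R) := hg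
      exact ((Subring.mem_centralizer_iff.mp hg') x (Set.mem_singleton x)).symm
    have hcomm : ∀ a b : S, (a : R) * b = (b : R) * a := by
      intro a b
      have h1 : (a : R) ∈ Subring.centralizer ((T : Subring R) : Set R) := a.2
      exact ((Subring.mem_centralizer_iff.mp h1) (b : R) (hST _ b.2)).symm
    letI : CommRing S :=
      { (inferInstance : Ring S) with mul_comm := fun a b => Subtype.ext (hcomm a b) }
    have hcoe_mul : ∀ a b : S, ((a * b : S) : R) = (a : R) * (b : R) := fun a b => rfl
    have hcoe_pow : ∀ (s : S) (t : ℕ), ((s ^ t : S) : R) = (s : R) ^ t := by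
      intro s t
      induction t with
      | zero => rw [pow_zero s, pow_zero (s : R)]; rfl
      | succ t ih => rw [pow_succ s t, pow_succ (s : R) t, hcoe_mul, ih]
    have hSS : ∀ s : S, ∃ n : ℕ, 2 ≤ n ∧ ∃ k : ℕ, (s - s ^ n) ^ k = 0 := by
      intro s
      obtain ⟨n, hn, ⟨k, hk⟩, -⟩ := h (s : R) (s : R)
      refine ⟨n, hn, k, ?_⟩
      apply Subtype.ext
      have hsub : ((s - s ^ n : S) : R) = (s : R) - (s : R) ^ n := by
        rw [← hcoe_pow]; rfl
      calc (((s - s ^ n) ^ k : S) : R) = ((s - s ^ n : S) : R) ^ k := hcoe_pow _ _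
        _ = ((s : R) - (s : R) ^ n) ^ k := by rw [hsub]
        _ = 0 := hk
    obtain ⟨m, n, hmn, heq⟩ := chacron_comm hSS ⟨x, hxS⟩
    refine ⟨m, n, hmn, ?_⟩
    have h1 := congrArg (fun s : S => (s : R)) heq
    rw [hcoe_pow, hcoe_pow] at h1
    exact h1
end

section
/- If R is a periodic ring, then for every a ∈ R there exists a potent element p ∈ R and a nilpotent w ∈ R such that a = p + w and pw = wp. -/
/-- An element `p` is potent if `p = p ^ m` for some `m ≥ 2`. -/
def IsPotent {R : Type*} [Ring R] (p : R) : Prop :=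
  ∃ m : ℕ, 2 ≤ m ∧ p = p ^ m

theorem periodic_potent_plus_nilpotent {R : Type*} [Ring R]
    (hR : IsPeriodicRing R) (a : R) :
    ∃ p w : R, IsPotent p ∧ IsNilpotent w ∧ a = p + w ∧ p * w = w * p := by
  obtain ⟨m, n, hmn, h⟩ := hR a
  wlog hlt : m < n generalizing m n
  · exact this n m hmn.symm h.symm (by omega)
  obtain ⟨d, hd1, hdn⟩ : ∃ d, 1 ≤ d ∧ n = m + d := ⟨n - m, by omega, by omega⟩
  have hmd : a ^ m = a ^ (m + d) := by rw [← hdn]; exact h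
  have step : ∀ t, m ≤ t → a ^ t = a ^ (t + d) := by
    intro t ht
    have h1 : a ^ t = a ^ (t - m) * a ^ m := by rw [← pow_add]; congr 1; omega
    rw [h1, hmd, ← pow_add]; congr 1; omega
  have key : ∀ k t, m ≤ t → a ^ t = a ^ (t + k * d) := by
    intro k
    induction k with
    | zero => simp
    | succ k ih =>
      intro t ht
      rw [ih t ht, step (t + k * d) (by omega)]
      congr 1; ring
  obtain ⟨s, hsm, hs1, hsd⟩ : ∃ s, m ≤ s ∧ 1 ≤ s ∧ s = (m + 1) * d := by
    refine ⟨(m + 1) * d, ?_, ?_, rfl⟩ <;> nlinarith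
  have hee : (a ^ s) * (a ^ s) = a ^ s := by
    rw [← pow_add]
    have := key (m + 1) s hsm
    rw [← hsd] at this
    exact this.symm
  set e : R := a ^ s with he
  have hcomm : a * e = e * a := by rw [he, ← pow_succ', ← pow_succ]
  have hC : Commute a e := hcomm
  have hepow : ∀ k : ℕ, e ^ (k + 1) = e := by
    intro k
    induction k with
    | zero => simp
    | succ k ih => rw [pow_succ, ih, hee]
  have has1 : a ^ (s + 1) = a * e := by rw [pow_succ', he]
  refine ⟨a * e, a - a * e, ⟨s + 1, by omega, ?_⟩, ⟨s + 1, ?_⟩, by noncomm_ring, ?_⟩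
  · rw [hC.mul_pow, hepow, has1, mul_assoc, hee]
  · have h1e : (1 - e) * (1 - e) = 1 - e := by
      have : (1 - e) * (1 - e) = 1 - e - e + e * e := by noncomm_ring
      rw [this, hee]; noncomm_ring
    have h1epow : ∀ k : ℕ, (1 - e) ^ (k + 1) = 1 - e := by
      intro k
      induction k with
      | zero => simp
      | succ k ih => rw [pow_succ, ih, h1e]
    have hc : Commute a (1 - e) := by
      show a * (1 - e) = (1 - e) * a
      rw [mul_sub, sub_mul, mul_one, one_mul, hcomm]
    have hw : a - a * e = a * (1 - e) := by noncomm_ring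
    rw [hw, hc.mul_pow, h1epow, has1, mul_assoc, mul_sub, mul_one, hee, sub_self, mul_zero]
  · have k2 : e * (a * e) = a * e := by rw [← mul_assoc, ← hcomm, mul_assoc, hee]
    have h1 : a * e * (a - a * e) = 0 := by
      rw [mul_sub, mul_assoc a e a, ← hcomm, mul_assoc a e (a * e), k2, ← mul_assoc, sub_self]
    have h2 : (a - a * e) * (a * e) = 0 := by
      rw [sub_mul, mul_assoc a e (a * e), k2, ← mul_assoc, sub_self]
    rw [h1, h2]
end

section
/- If R is a periodic ring, then the quotient R[[x]]/(x^n) of the power series ring by the ideal generated by x^n is periodic for every n ≥ 1. -/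
section Aux

variable {S : Type*} [Ring S]

/-- eventual periodicity of powers -/
lemma pow_stab {a : S} {m r : ℕ} (h : a ^ m = a ^ (m + r)) :
    ∀ i, m ≤ i → ∀ j, a ^ (i + j * r) = a ^ i := by
  have step : ∀ i, m ≤ i → a ^ (i + r) = a ^ i := by
    intro i hi
    have h1 : a ^ (i + r) = a ^ (i - m) * a ^ (m + r) := by
      rw [← pow_add]; congr 1; omega
    have h2 : a ^ i = a ^ (i - m) * a ^ m := by
      rw [← pow_add]; congr 1; omega
    rw [h1, ← h, ← h2]
  intro i hi j
  induction j with
  | zero => simp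
  | succ j ih =>
      have : i + (j + 1) * r = (i + j * r) + r := by ring
      rw [this, step (i + j * r) (le_trans hi (Nat.le_add_right _ _)), ih]

/-- From a periodic relation on `a`, get `a ^ K = a ^ (2 K)` for some `K ≥ 1`. -/
lemma exists_pow_eq_pow_two_mul' {a : S} {m r : ℕ} (hr : 1 ≤ r)
    (h : a ^ m = a ^ (m + r)) : ∃ K, 1 ≤ K ∧ a ^ K = a ^ (2 * K) := by
  refine ⟨(m + 1) * r, Nat.mul_pos (by omega) hr, ?_⟩
  have := pow_stab h ((m + 1) * r) (by nlinarith) (m + 1)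
  rw [← this]
  congr 1
  ring

lemma one_add_pow_char {C : ℕ} (hC1 : 1 ≤ C) (hC : (C : S) = 0) (x : S) :
    ∃ q : S, (∀ t : S, Commute t x → Commute t q) ∧ (1 + x) ^ C = 1 + x ^ 2 * q := by
  obtain ⟨C', rfl⟩ : ∃ C', C = C' + 1 := ⟨C - 1, by omega⟩
  refine ⟨∑ i ∈ Finset.range C', x ^ i * ((C' + 1).choose (i + 2) : S), ?_, ?_⟩
  · intro t ht
    exact Commute.sum_right _ _ _ fun i _ =>
      ((ht.pow_right i).mul_right (Nat.commute_cast t _))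
  · have hpow := (Commute.one_right x).add_pow (C' + 1)
    rw [add_comm x 1] at hpow
    rw [hpow]
    rcases Nat.eq_zero_or_pos C' with h0 | hpos
    · subst h0
      have h10 : (0 : S) = 1 := by simpa using hC.symm
      haveI := subsingleton_of_zero_eq_one h10
      exact Subsingleton.elim _ _
    · obtain ⟨C'', rfl⟩ : ∃ C'', C' = C'' + 1 := ⟨C' - 1, by omega⟩
      rw [Finset.sum_range_succ', Finset.sum_range_succ']
      have e0 : x ^ 0 * 1 ^ (C'' + 1 + 1 - 0) * ((C'' + 1 + 1).choose 0 : S) = 1 := by simp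
      have e1 : x ^ (0 + 1) * 1 ^ (C'' + 1 + 1 - (0 + 1)) *
          ((C'' + 1 + 1).choose (0 + 1) : S) = 0 := by
        simp only [zero_add, pow_one, one_pow, mul_one, Nat.choose_one_right]
        rw [hC, mul_zero]
      rw [e0, e1, add_zero]
      rw [add_comm]
      congr 1
      rw [Finset.mul_sum]
      refine Finset.sum_congr rfl fun i _ => ?_
      simp only [one_pow, mul_one]
      rw [← mul_assoc, ← pow_add, add_comm 2 i]

lemma one_add_pow_char_pow {C : ℕ} (hC1 : 1 ≤ C) (hC : (C : S) = 0) (v : S) (k : ℕ) :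
    ∃ q : S, (∀ t : S, Commute t v → Commute t q) ∧
      (1 + v) ^ (C ^ k) = 1 + v ^ (2 ^ k) * q := by
  induction k with
  | zero => exact ⟨1, fun t _ => Commute.one_right t, by simp⟩
  | succ k ih =>
      obtain ⟨q, hq, hpow⟩ := ih
      have hvq : Commute v q := hq v (Commute.refl v)
      obtain ⟨q', hq', hpow'⟩ := one_add_pow_char hC1 hC (v ^ 2 ^ k * q)
      refine ⟨q ^ 2 * q', ?_, ?_⟩
      · intro t ht
        exact ((hq t ht).pow_right 2).mul_right
          (hq' t ((ht.pow_right _).mul_right (hq t ht)))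
      · rw [pow_succ, pow_mul, hpow, hpow']
        congr 1
        have h2 : (v ^ 2 ^ k * q) ^ 2 = v ^ 2 ^ (k + 1) * q ^ 2 := by
          rw [sq, sq, pow_succ, pow_mul, sq]
          rw [mul_assoc, ← mul_assoc q (v ^ 2 ^ k) q, (hvq.symm.pow_right _).eq,
            mul_assoc, ← mul_assoc]
        rw [h2, mul_assoc]

/-- Key lemma: if `(y^2 - y)^n = 0` and the ring has characteristic dividing `C ≥ 1`,
then powers of `y` are eventually periodic. -/
lemma key_lemma {y : S} {n C : ℕ} (hn : 1 ≤ n) (hC1 : 1 ≤ C) (hC : (C : S) = 0)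
    (hz : (y ^ 2 - y) ^ n = 0) : ∃ M, 1 ≤ M ∧ y ^ (2 * n + M) = y ^ (2 * n) := by
  have hz' : (y - y ^ 2) ^ n = 0 := by
    have h : y - y ^ 2 = -(y ^ 2 - y) := by abel
    rw [h, neg_pow, hz, mul_zero]
  set e : S := 1 - (1 - y ^ n) ^ n with he_def
  have he : IsIdempotentElem e := isIdempotentElem_one_sub_one_sub_pow_pow y n hz'
  have hye : Commute y e :=
    (Commute.one_right y).sub_right
      (((Commute.one_right y).sub_right ((Commute.refl y).pow_right n)).pow_right n)
  -- e = y^n * c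
  set c : S := ∑ i ∈ Finset.range n, (1 - y ^ n) ^ i with hc_def
  have hyc : Commute y c :=
    Commute.sum_right _ _ _ fun i _ =>
      ((Commute.one_right y).sub_right ((Commute.refl y).pow_right n)).pow_right i
  have hec : e = y ^ n * c := by
    have h := geom_sum_mul (1 - y ^ n) n
    have h1 : (1 - y ^ n) - 1 = -(y ^ n) := by abel
    rw [h1, mul_neg] at h
    have h2 : c * y ^ n = 1 - (1 - y ^ n) ^ n := by
      have h3 := neg_eq_iff_eq_neg.mp h
      rw [neg_sub] at h3
      exact h3
    rw [he_def, ← h2, (hyc.pow_left n).eq]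
  -- 1 - e = (1-y)^n * d
  set d : S := (∑ i ∈ Finset.range n, y ^ i) ^ n with hd_def
  have hyd : Commute y d :=
    (Commute.sum_right _ _ _ fun i _ => (Commute.refl y).pow_right i).pow_right n
  have hsum_comm : Commute (1 - y) (∑ i ∈ Finset.range n, y ^ i) :=
    Commute.sub_left
      (Commute.sum_right _ _ _ fun i _ => (Commute.one_left y).pow_right i)
      (Commute.sum_right _ _ _ fun i _ => (Commute.refl y).pow_right i)
  have hed : 1 - e = (1 - y) ^ n * d := by
    have h := geom_sum_mul y n
    have h1 : 1 - y ^ n = (1 - y) * ∑ i ∈ Finset.range n, y ^ i := by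
      rw [hsum_comm.eq]
      have hrw : (∑ i ∈ Finset.range n, y ^ i) * (1 - y) =
          -((∑ i ∈ Finset.range n, y ^ i) * (y - 1)) := by
        rw [← mul_neg, neg_sub]
      rw [hrw, h, neg_sub]
    rw [he_def, sub_sub_cancel, h1, hsum_comm.mul_pow, hd_def]
  -- y^j * (1 - e) = 0 for j ≥ n
  have hA : ∀ j, n ≤ j → y ^ j * (1 - e) = 0 := by
    intro j hj
    have hcomm : Commute y (1 - y) := (Commute.one_right y).sub_right (Commute.refl y)
    have h1 : y ^ n * (1 - y) ^ n = 0 := by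
      rw [← hcomm.mul_pow]
      have h2 : y * (1 - y) = y - y ^ 2 := by
        rw [mul_sub, mul_one, sq]
      rw [h2, hz']
    calc y ^ j * (1 - e) = y ^ (j - n) * (y ^ n * (1 - y) ^ n) * d := by
          rw [hed, ← mul_assoc, ← mul_assoc, ← pow_add]
          congr 3
          omega
      _ = 0 := by rw [h1, mul_zero, zero_mul]
  -- (y-1)^n * y^n = 0
  have hB : (y - 1) ^ n * y ^ n = 0 := by
    have hcomm : Commute (y - 1) y := (Commute.refl y).sub_left (Commute.one_left y)
    rw [← hcomm.mul_pow]
    have h : (y - 1) * y = y ^ 2 - y := by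
      rw [sub_mul, one_mul, sq]
    rw [h, hz]
  -- the nilpotent part v
  set v : S := (y - 1) * e with hv_def
  have hy1e : Commute (y - 1) e := Commute.sub_left hye (Commute.one_left e)
  have hyv : Commute y v := ((Commute.refl y).sub_right (Commute.one_right y)).mul_right hye
  have hev : e * v = v := by
    rw [hv_def, ← mul_assoc, ← hy1e.eq, mul_assoc, he.eq]
  have hve : v * e = v := by rw [hv_def, mul_assoc, he.eq]
  have hev_comm : Commute e v := by rw [Commute, SemiconjBy, hev, hve]
  have hvpow : v ^ (2 * n) = 0 := by
    have h2n : 2 * n = (2 * n - 1) + 1 := by omega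
    have hepow : e ^ (2 * n) = e := by rw [h2n]; exact he.pow_succ_eq _
    rw [hv_def, hy1e.mul_pow, hepow, hec, two_mul, pow_add, mul_assoc,
      ← mul_assoc ((y - 1) ^ n) (y ^ n) c, hB, zero_mul, mul_zero]
  -- y * e = e * (1 + v)
  have hyee : y * e = e * (1 + v) := by
    rw [mul_add, mul_one, hev, hv_def, sub_mul, one_mul]
    abel
  -- choose k with 2^k ≥ 2n
  set k : ℕ := 2 * n with hk_def
  have h2k : 2 * n ≤ 2 ^ k := le_of_lt Nat.lt_two_pow_self
  set M : ℕ := C ^ k with hM_def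
  have hM1 : 1 ≤ M := Nat.one_le_iff_ne_zero.mpr (pow_ne_zero _ (by omega))
  -- (1+v)^M = 1
  have hu : (1 + v) ^ M = 1 := by
    obtain ⟨q, hq, hpow⟩ := one_add_pow_char_pow hC1 hC v k
    have hvk : v ^ (2 ^ k) = 0 := by
      have h : v ^ (2 ^ k) = v ^ (2 * n) * v ^ (2 ^ k - 2 * n) := by
        rw [← pow_add]; congr 1; omega
      rw [h, hvpow, zero_mul]
    rw [hM_def, hpow, hvk, zero_mul, add_zero]
  -- y^M * e = e
  have hepowM : e ^ M = e := by
    obtain ⟨M', hM'⟩ : ∃ M', M = M' + 1 := ⟨M - 1, by omega⟩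
    rw [hM']; exact he.pow_succ_eq _
  have hyM : y ^ M * e = e := by
    have h1 : (y * e) ^ M = y ^ M * e ^ M := hye.mul_pow M
    have h2 : (y * e) ^ M = e := by
      rw [hyee, ((Commute.one_right e).add_right hev_comm).mul_pow, hepowM, hu, mul_one]
    rw [← hepowM, ← h1, h2]; exact hepowM.symm
  refine ⟨M, hM1, ?_⟩
  have hgen : ∀ j, n ≤ j → y ^ j = y ^ j * e := by
    intro j hj
    have h := hA j hj
    rw [mul_sub, mul_one, sub_eq_zero] at h
    exact h
  calc y ^ (2 * n + M) = y ^ (2 * n + M) * e := hgen _ (by omega)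
    _ = y ^ (2 * n) * (y ^ M * e) := by rw [← mul_assoc, ← pow_add]
    _ = y ^ (2 * n) * e := by rw [hyM]
    _ = y ^ (2 * n) := (hgen _ (by omega)).symm

/-- A periodic ring has positive characteristic (dividing some `C ≥ 1`). -/
lemma periodic_char {R : Type*} [Ring R] (hR : IsPeriodicRing R) :
    ∃ C : ℕ, 1 ≤ C ∧ ((C : ℕ) : R) = 0 := by
  obtain ⟨m, n, hmn, h⟩ := hR 2
  have key : ∀ m n : ℕ, m < n → (2 : R) ^ m = (2 : R) ^ n →
      ∃ C : ℕ, 1 ≤ C ∧ ((C : ℕ) : R) = 0 := by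
    intro m n hlt h
    refine ⟨2 ^ n - 2 ^ m, ?_, ?_⟩
    · have : (2:ℕ) ^ m < 2 ^ n := Nat.pow_lt_pow_right one_lt_two hlt
      omega
    · have hle : (2:ℕ) ^ m ≤ 2 ^ n := le_of_lt (Nat.pow_lt_pow_right one_lt_two hlt)
      rw [Nat.cast_sub hle]
      have hm : ((2 ^ m : ℕ) : R) = (2 : R) ^ m := by push_cast; ring
      have hn : ((2 ^ n : ℕ) : R) = (2 : R) ^ n := by push_cast; ring
      rw [hm, hn, h, sub_self]
  rcases Nat.lt_or_ge m n with hlt | hge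
  · exact key m n hlt h
  · exact key n m (by omega) h.symm

end Aux

theorem powerSeries_quot_periodic (R : Type*) [Ring R] (hR : IsPeriodicRing R)
    (n : ℕ) (hn : 1 ≤ n) :
    IsPeriodicRing
      ((TwoSidedIdeal.span {(PowerSeries.X : PowerSeries R) ^ n}).ringCon.Quotient) := by
  classical
  set I := TwoSidedIdeal.span {(PowerSeries.X : PowerSeries R) ^ n} with hI
  set φ : PowerSeries R →+* I.ringCon.Quotient := RingCon.mk' I.ringCon with hφ
  have hφ_surj : Function.Surjective φ := fun s => Quotient.exists_rep s
  have hXn : φ ((PowerSeries.X : PowerSeries R) ^ n) = 0 := by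
    have hmem : (PowerSeries.X : PowerSeries R) ^ n ∈ I :=
      TwoSidedIdeal.subset_span rfl
    have h : I.ringCon ((PowerSeries.X : PowerSeries R) ^ n) 0 :=
      (TwoSidedIdeal.mem_iff _ _).mp hmem
    exact Quotient.sound h
  obtain ⟨C, hC1, hCR⟩ := periodic_char hR
  have hCS : ((C : ℕ) : I.ringCon.Quotient) = 0 := by
    have h1 : ((C : ℕ) : PowerSeries R) = 0 := by
      have := map_natCast (PowerSeries.C (R := R)) C
      rw [← this, hCR, map_zero]
    rw [← map_natCast φ C, h1, map_zero]
  intro s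
  obtain ⟨f, rfl⟩ := hφ_surj s
  set a : R := PowerSeries.constantCoeff f with ha
  obtain ⟨m₀, n₀, hmn₀, hper⟩ := hR a
  have hKey : ∀ m₀ n₀ : ℕ, m₀ < n₀ → a ^ m₀ = a ^ n₀ →
      ∃ p q : ℕ, p ≠ q ∧ φ f ^ p = φ f ^ q := by
    intro m₁ n₁ hlt hper
    have hper' : a ^ m₁ = a ^ (m₁ + (n₁ - m₁)) := by
      rw [hper]; congr 1; omega
    obtain ⟨K, hK1, hKeq⟩ := exists_pow_eq_pow_two_mul' (by omega) hper'
    -- g := f^K has g^2 - g with zero constant coefficient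
    have hcc : PowerSeries.constantCoeff ((f ^ K) ^ 2 - f ^ K) = 0 := by
      rw [map_sub, map_pow, map_pow, ← ha, ← pow_mul, mul_comm K 2, ← hKeq, sub_self]
    obtain ⟨h, hh⟩ := PowerSeries.X_dvd_iff.mpr hcc
    have hXh : ((f ^ K) ^ 2 - f ^ K) ^ n = PowerSeries.X ^ n * h ^ n := by
      rw [hh, ((PowerSeries.commute_X h).symm).mul_pow]
    have hnil : (φ (f ^ K) ^ 2 - φ (f ^ K)) ^ n = 0 := by
      have h4 : φ (f ^ K) ^ 2 - φ (f ^ K) = φ ((f ^ K) ^ 2 - f ^ K) := by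
        simp only [map_sub, map_pow]
      rw [h4, ← map_pow, hXh, map_mul, hXn, zero_mul]
    obtain ⟨M, hM1, hMeq⟩ := key_lemma hn hC1 hCS hnil
    refine ⟨K * (2 * n + M), K * (2 * n), ?_, ?_⟩
    · have : 0 < K := hK1
      have : 0 < M := hM1
      have : 0 < n := hn
      nlinarith
    · have h1 : φ f ^ (K * (2 * n + M)) = φ (f ^ K) ^ (2 * n + M) := by
        rw [map_pow, ← pow_mul]
      have h2 : φ f ^ (K * (2 * n)) = φ (f ^ K) ^ (2 * n) := by
        rw [map_pow, ← pow_mul]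
      rw [h1, h2, hMeq]
  rcases Nat.lt_or_ge m₀ n₀ with hlt | hge
  · exact hKey m₀ n₀ hlt hper
  · exact hKey n₀ m₀ (by omega) hper.symm
end

section
/- If R is a strongly periodic ring, then the set of nilpotent elements N(R) equals the prime radical P(R); in particular N(R) is an ideal of R. -/
/-- A two-sided ideal `P` is prime if it is proper and `aRb ⊆ P` implies `a ∈ P` or `b ∈ P`. -/
def TwoSidedIdeal.IsPrime {R : Type*} [Ring R] (P : TwoSidedIdeal R) : Prop :=
  (P : Set R) ≠ Set.univ ∧ ∀ a b : R, (∀ r : R, a * r * b ∈ P) → a ∈ P ∨ b ∈ P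

/-- The prime radical `P(R)`: the intersection of all prime (two-sided) ideals of `R`. -/
def primeRadical (R : Type*) [Ring R] : TwoSidedIdeal R :=
  sInf {P : TwoSidedIdeal R | P.IsPrime}

/-- A ring is strongly periodic if every element is the sum of a commuting potent element
and an element of the prime radical. -/
def StronglyPeriodicRing (R : Type*) [Ring R] : Prop :=
  ∀ a : R, ∃ p : R, IsPotent p ∧ a - p ∈ primeRadical R ∧ a * p = p * a

section Aux

variable {R : Type*} [Ring R]

lemma aux_pow_mem (I : TwoSidedIdeal R) {q : R} (hq : q ∈ I) : ∀ n : ℕ, 0 < n → q ^ n ∈ I := by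
  intro n hn
  induction n with
  | zero => omega
  | succ k ih =>
    rcases Nat.eq_zero_or_pos k with rfl | hk
    · simpa using hq
    · rw [pow_succ]; exact I.mul_mem_right _ _ (ih hk)

lemma aux_span_mul_span (M : TwoSidedIdeal R) (x y : R) (h : ∀ r : R, x * r * y ∈ M) :
    ∀ s ∈ TwoSidedIdeal.span {x}, ∀ t ∈ TwoSidedIdeal.span {y}, s * t ∈ M := by
  intro s hs t ht
  rw [TwoSidedIdeal.mem_span_iff_mem_addSubgroup_closure] at hs ht
  induction hs using AddSubgroup.closure_induction with
  | mem s hsmem =>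
    induction ht using AddSubgroup.closure_induction with
    | mem t htmem =>
      simp only [Set.mem_mul, Set.mem_univ, Set.mem_singleton_iff, true_and] at hsmem htmem
      obtain ⟨u, ⟨r, x', hx', rfl⟩, c, rfl⟩ := hsmem
      obtain ⟨v, ⟨r', y', hy', rfl⟩, c', rfl⟩ := htmem
      rw [← hx', ← hy'] at h
      have e : (r * x' * c) * (r' * y' * c') = r * (x' * (c * r') * y') * c' := by
        simp only [mul_assoc]
      rw [e]
      exact M.mul_mem_right _ _ (M.mul_mem_left _ _ (h _))
    | zero => rw [mul_zero]; exact M.zero_mem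
    | add a b _ _ ha hb => rw [mul_add]; exact M.add_mem ha hb
    | neg a _ ha => rw [mul_neg]; exact M.neg_mem ha
  | zero => rw [zero_mul]; exact M.zero_mem
  | add a b _ _ ha hb => rw [add_mul]; exact M.add_mem ha hb
  | neg a _ ha => rw [neg_mul]; exact M.neg_mem ha

lemma aux_exists_prime_not_mem {a : R} (ha : ¬ IsNilpotent a) :
    ∃ P : TwoSidedIdeal R, P.IsPrime ∧ a ∉ P := by
  set S : Set (TwoSidedIdeal R) := {I | ∀ n : ℕ, 0 < n → a ^ n ∉ I} with hS
  have hbot : (⊥ : TwoSidedIdeal R) ∈ S := by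
    intro n hn hmem
    rw [TwoSidedIdeal.mem_bot] at hmem
    exact ha ⟨n, hmem⟩
  have hchainub : ∀ c ⊆ S, IsChain (· ≤ ·) c → ∀ I ∈ c, ∃ ub ∈ S, ∀ z ∈ c, z ≤ ub := by
    intro c hcS hchain I hI
    refine ⟨TwoSidedIdeal.mk' (⋃ J ∈ c, (J : Set R))
      (Set.mem_biUnion hI I.zero_mem)
      (fun {x y} hx hy => ?_) (fun {x} hx => ?_) (fun {x y} hy => ?_) (fun {x y} hx => ?_),
      ?_, ?_⟩
    · obtain ⟨J1, hJ1, hx⟩ := Set.mem_iUnion₂.1 hx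
      obtain ⟨J2, hJ2, hy⟩ := Set.mem_iUnion₂.1 hy
      rcases hchain.total hJ1 hJ2 with hle | hle
      · exact Set.mem_biUnion hJ2 (J2.add_mem (hle hx) hy)
      · exact Set.mem_biUnion hJ1 (J1.add_mem hx (hle hy))
    · obtain ⟨J, hJ, hx⟩ := Set.mem_iUnion₂.1 hx
      exact Set.mem_biUnion hJ (J.neg_mem hx)
    · obtain ⟨J, hJ, hy⟩ := Set.mem_iUnion₂.1 hy
      exact Set.mem_biUnion hJ (J.mul_mem_left _ _ hy)
    · obtain ⟨J, hJ, hx⟩ := Set.mem_iUnion₂.1 hx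
      exact Set.mem_biUnion hJ (J.mul_mem_right _ _ hx)
    · intro n hn hmem
      rw [TwoSidedIdeal.mem_mk'] at hmem
      obtain ⟨J, hJ, hmem⟩ := Set.mem_iUnion₂.1 hmem
      exact hcS hJ n hn hmem
    · intro J hJ x hx
      rw [TwoSidedIdeal.mem_mk']
      exact Set.mem_biUnion hJ hx
  obtain ⟨M, -, hMS, hMmax⟩ := zorn_le_nonempty₀ S hchainub ⊥ hbot
  have haM : a ∉ M := by simpa using hMS 1 one_pos
  refine ⟨M, ⟨?_, ?_⟩, haM⟩
  · intro h
    exact haM (by rw [← SetLike.mem_coe, h]; trivial)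
  · intro x y hxy
    by_contra hcon
    push_neg at hcon
    obtain ⟨hx, hy⟩ := hcon
    have hnotS : ∀ z : R, z ∉ M → ∃ n : ℕ, 0 < n ∧ a ^ n ∈ M ⊔ TwoSidedIdeal.span {z} := by
      intro z hz
      by_contra hc
      push_neg at hc
      have hmem : M ⊔ TwoSidedIdeal.span {z} ∈ S := fun n hn => hc n hn
      have := hMmax hmem le_sup_left
      exact hz (this (TwoSidedIdeal.mem_sup_right (TwoSidedIdeal.subset_span rfl)))
    obtain ⟨i, hi, hai⟩ := hnotS x hx
    obtain ⟨j, hj, haj⟩ := hnotS y hy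
    rw [TwoSidedIdeal.mem_sup] at hai haj
    obtain ⟨m1, hm1, t1, ht1, he1⟩ := hai
    obtain ⟨m2, hm2, t2, ht2, he2⟩ := haj
    have : a ^ (i + j) ∈ M := by
      rw [pow_add, ← he1, ← he2]
      have : (m1 + t1) * (m2 + t2) = (m1 * (m2 + t2) + t1 * m2) + t1 * t2 := by
        rw [add_mul, mul_add t1, add_assoc]
      rw [this]
      exact M.add_mem (M.add_mem (M.mul_mem_right _ _ hm1) (M.mul_mem_left _ _ hm2))
        (aux_span_mul_span M x y hxy t1 ht1 t2 ht2)
    exact hMS (i + j) (by omega) this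

lemma aux_potent_iterate {p : R} {m : ℕ} (hm : 2 ≤ m) (hpm : p = p ^ m) :
    ∀ t : ℕ, p = p ^ ((m - 1) * t + 1) := by
  intro t
  induction t with
  | zero => simp
  | succ k ih =>
    have : (m - 1) * (k + 1) + 1 = ((m - 1) * k + 1) + (m - 1) := by ring
    rw [this, pow_add, ← ih]
    have h1 : p * p ^ (m - 1) = p ^ m := by
      rw [← pow_succ']
      congr 1
      omega
    rw [h1, ← hpm]

end Aux

theorem stronglyPeriodic_nilpotents_eq_primeRadical (R : Type*) [Ring R]
    (hR : StronglyPeriodicRing R) :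
    {x : R | IsNilpotent x} = (primeRadical R : Set R) ∧
      ∃ I : TwoSidedIdeal R, (I : Set R) = {x : R | IsNilpotent x} := by
  have main : {x : R | IsNilpotent x} = (primeRadical R : Set R) := by
    ext x
    simp only [Set.mem_setOf_eq, SetLike.mem_coe]
    constructor
    · rintro ⟨n, hn⟩
      have hn1 : x ^ (n + 1) = 0 := by rw [pow_succ, hn, zero_mul]
      obtain ⟨p, ⟨m, hm, hpm⟩, hq, hcomm⟩ := hR x
      set q := x - p with hqdef
      have hxq : Commute x (-q) := by
        have : x * q = q * x := by
          rw [hqdef, mul_sub, sub_mul, hcomm]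
        rw [Commute, SemiconjBy, mul_neg, neg_mul, this]
      have hqP : -q ∈ primeRadical R := (primeRadical R).neg_mem hq
      set N : ℕ := (m - 1) * (n + 1) + 1 with hNdef
      have hpN : p = p ^ N := aux_potent_iterate hm hpm (n + 1)
      have hxqp : x + (-q) = p := by rw [hqdef]; abel
      have hpP : p ∈ primeRadical R := by
        rw [hpN, ← hxqp, hxq.add_pow]
        apply TwoSidedIdeal.finsetSum_mem
        intro k hk
        simp only [Finset.mem_range] at hk
        rcases le_or_gt (n + 1) k with hkn | hkn
        · have : x ^ k = 0 := by
            obtain ⟨d, rfl⟩ := Nat.exists_eq_add_of_le hkn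
            rw [pow_add, hn1, zero_mul]
          rw [this, zero_mul, zero_mul]
          exact (primeRadical R).zero_mem
        · have hNk : 0 < N - k := by
            have hm1 : 1 ≤ m - 1 := by omega
            have : n + 1 ≤ (m - 1) * (n + 1) := Nat.le_mul_of_pos_left _ (by omega)
            omega
          exact (primeRadical R).mul_mem_right _ _
            ((primeRadical R).mul_mem_left _ _ (aux_pow_mem _ hqP _ hNk))
      have : x = q + p := by rw [hqdef]; abel
      rw [this]
      exact (primeRadical R).add_mem hq hpP
    · intro hx
      by_contra hnil
      obtain ⟨P, hP, haP⟩ := aux_exists_prime_not_mem hnil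
      exact haP ((TwoSidedIdeal.mem_sInf R).1 hx P hP)
  exact ⟨main, primeRadical R, main.symm⟩
end

section
/- A ring R is strongly periodic if and only if for every a ∈ R there exists a potent element p ∈ R such that a - p ∈ P(R) (i.e., the commutativity condition ap = pa in the definition is automatic). -/
section Aux

variable {R : Type*} [Ring R]

open TwoSidedIdeal Polynomial

/-- Every element of the prime radical is nilpotent. -/
lemma primeRadical_nilpotent {x : R} (hx : x ∈ primeRadical R) :
    ∃ n : ℕ, 1 ≤ n ∧ x ^ n = 0 := by
  by_contra hcon
  push_neg at hcon
  -- Zorn: a maximal ideal among those avoiding all powers of `x`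
  set S : Set (TwoSidedIdeal R) := {I | ∀ n : ℕ, 1 ≤ n → x ^ n ∉ I} with hSdef
  have hbot : (⊥ : TwoSidedIdeal R) ∈ S := by
    intro n hn h
    exact hcon n hn (by simpa using h)
  have hub : ∀ c ⊆ S, IsChain (· ≤ ·) c → ∀ y ∈ c,
      ∃ ub ∈ S, ∀ z ∈ c, z ≤ ub := by
    intro c hcS hchain y hy
    refine ⟨TwoSidedIdeal.mk' (⋃ I ∈ c, (I : Set R))
      (Set.mem_biUnion hy y.zero_mem)
      ?_ ?_ ?_ ?_, ?_, ?_⟩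
    · rintro u v hu hv
      obtain ⟨I, hI, hu⟩ := Set.mem_iUnion₂.mp hu
      obtain ⟨J, hJ, hv⟩ := Set.mem_iUnion₂.mp hv
      rcases hchain.total hI hJ with h | h
      · exact Set.mem_biUnion hJ (J.add_mem (h hu) hv)
      · exact Set.mem_biUnion hI (I.add_mem hu (h hv))
    · rintro u hu
      obtain ⟨I, hI, hu⟩ := Set.mem_iUnion₂.mp hu
      exact Set.mem_biUnion hI (I.neg_mem hu)
    · rintro r u hu
      obtain ⟨I, hI, hu⟩ := Set.mem_iUnion₂.mp hu
      exact Set.mem_biUnion hI (I.mul_mem_left _ _ hu)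
    · rintro u r hu
      obtain ⟨I, hI, hu⟩ := Set.mem_iUnion₂.mp hu
      exact Set.mem_biUnion hI (I.mul_mem_right _ _ hu)
    · intro n hn hmem
      rw [TwoSidedIdeal.mem_mk'] at hmem
      obtain ⟨I, hI, hmem⟩ := Set.mem_iUnion₂.mp hmem
      exact hcS hI n hn hmem
    · intro I hI
      rw [TwoSidedIdeal.le_iff]
      intro u hu
      rw [SetLike.mem_coe, TwoSidedIdeal.mem_mk']
      exact Set.mem_biUnion hI hu
  obtain ⟨M, -, hMS, hMmax⟩ := zorn_le_nonempty₀ S hub ⊥ hbot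
  -- the maximal ideal is prime
  have key : ∀ y : R, y ∉ M → ∃ i : ℕ, 1 ≤ i ∧ x ^ i ∈ M ⊔ span {y} := by
    intro y hy
    by_contra h
    push_neg at h
    have hmem : M ⊔ span {y} ∈ S := fun n hn => h n hn
    have hle : M ⊔ span {y} ≤ M := hMmax hmem le_sup_left
    exact hy (hle (mem_sup_right (subset_span rfl)))
  have hMprime : M.IsPrime := by
    constructor
    · intro h
      have hx1 : x ∈ M := by
        rw [← SetLike.mem_coe, h]; trivial
      exact hMS 1 le_rfl (by simpa using hx1)
    · intro a b hab
      by_contra hcon2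
      push_neg at hcon2
      obtain ⟨ha, hb⟩ := hcon2
      obtain ⟨i, hi1, hxi⟩ := key a ha
      obtain ⟨j, hj1, hxj⟩ := key b hb
      -- the ideal K of elements u with uRb ⊆ M and ub ∈ M
      set K : TwoSidedIdeal R := TwoSidedIdeal.mk'
        {u | u * b ∈ M ∧ ∀ r : R, u * r * b ∈ M}
        (by constructor <;> simp [M.zero_mem])
        (fun {u v} hu hv => ⟨by rw [add_mul]; exact M.add_mem hu.1 hv.1,
          fun r => by rw [add_mul, add_mul]; exact M.add_mem (hu.2 r) (hv.2 r)⟩)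
        (fun {u} hu => ⟨by rw [neg_mul]; exact M.neg_mem hu.1,
          fun r => by rw [neg_mul, neg_mul]; exact M.neg_mem (hu.2 r)⟩)
        (fun {r u} hu => ⟨by simpa [mul_assoc] using M.mul_mem_left r _ hu.1,
          fun r' => by simpa [mul_assoc] using M.mul_mem_left r _ (hu.2 r')⟩)
        (fun {u r} hu => ⟨hu.2 r,
          fun r' => by simpa [mul_assoc] using hu.2 (r * r')⟩) with hKdef
      have hMleK : M ≤ K := by
        intro u hu
        rw [hKdef, TwoSidedIdeal.mem_mk']
        exact ⟨M.mul_mem_right _ _ hu, fun r => M.mul_mem_right _ _ (M.mul_mem_right _ _ hu)⟩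
      have haK : ({a} : Set R) ⊆ K := by
        intro z hz
        rw [Set.mem_singleton_iff] at hz
        subst hz
        rw [SetLike.mem_coe, hKdef, TwoSidedIdeal.mem_mk']
        exact ⟨by simpa using hab 1, hab⟩
      have hspanK : span {a} ≤ K := fun u hu => mem_span_iff.mp hu K haK
      have hxiK := (sup_le hMleK hspanK) hxi
      rw [hKdef, TwoSidedIdeal.mem_mk'] at hxiK
      obtain ⟨h1, h2⟩ := hxiK
      -- the ideal J of elements v with x^i R v ⊆ M and x^i v ∈ M
      set J : TwoSidedIdeal R := TwoSidedIdeal.mk'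
        {v | x ^ i * v ∈ M ∧ ∀ r : R, x ^ i * r * v ∈ M}
        (by constructor <;> simp [M.zero_mem])
        (fun {u v} hu hv => ⟨by rw [mul_add]; exact M.add_mem hu.1 hv.1,
          fun r => by rw [mul_add]; exact M.add_mem (hu.2 r) (hv.2 r)⟩)
        (fun {u} hu => ⟨by rw [mul_neg]; exact M.neg_mem hu.1,
          fun r => by rw [mul_neg]; exact M.neg_mem (hu.2 r)⟩)
        (fun {r u} hu => ⟨by simpa [mul_assoc] using hu.2 r,
          fun r' => by simpa [mul_assoc] using hu.2 (r' * r)⟩)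
        (fun {u r} hu => ⟨by simpa [mul_assoc] using M.mul_mem_right _ r hu.1,
          fun r' => by simpa [mul_assoc] using M.mul_mem_right _ r (hu.2 r')⟩) with hJdef
      have hMleJ : M ≤ J := by
        intro u hu
        rw [hJdef, TwoSidedIdeal.mem_mk']
        exact ⟨M.mul_mem_left _ _ hu, fun r => M.mul_mem_left _ _ hu⟩
      have hbJ : ({b} : Set R) ⊆ J := by
        intro z hz
        rw [Set.mem_singleton_iff] at hz
        subst hz
        rw [SetLike.mem_coe, hJdef, TwoSidedIdeal.mem_mk']
        exact ⟨h1, h2⟩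
      have hspanJ : span {b} ≤ J := fun u hu => mem_span_iff.mp hu J hbJ
      have hxjJ := (sup_le hMleJ hspanJ) hxj
      rw [hJdef, TwoSidedIdeal.mem_mk'] at hxjJ
      have : x ^ (i + j) ∈ M := by
        rw [pow_add]; exact hxjJ.1
      exact hMS (i + j) (by omega) this
  -- contradiction : x ∈ M
  have hxM : x ∈ M := by
    have hle : primeRadical R ≤ M :=
      sInf_le (show M ∈ {P : TwoSidedIdeal R | P.IsPrime} from hMprime)
    exact hle hx
  exact hMS 1 le_rfl (by simpa using hxM)

lemma pow_sub_pow_mem (I : TwoSidedIdeal R) {a p : R} (h : a - p ∈ I) (m : ℕ) :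
    a ^ m - p ^ m ∈ I := by
  induction m with
  | zero => simpa using I.zero_mem
  | succ k ih =>
    have hrw : a ^ (k + 1) - p ^ (k + 1) = a ^ k * (a - p) + (a ^ k - p ^ k) * p := by
      rw [pow_succ, pow_succ, mul_sub, sub_mul]; abel
    rw [hrw]
    exact I.add_mem (I.mul_mem_left _ _ h) (I.mul_mem_right _ _ ih)

lemma exists_sub_pow_mem
    (hyp : ∀ a : R, ∃ p : R, IsPotent p ∧ a - p ∈ primeRadical R) (b : R) :
    ∃ m : ℕ, 2 ≤ m ∧ b - b ^ m ∈ primeRadical R := by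
  obtain ⟨p, ⟨m, hm, hp⟩, hbp⟩ := hyp b
  refine ⟨m, hm, ?_⟩
  have h2 := pow_sub_pow_mem _ hbp m
  have hrw : b - b ^ m = (b - p) - (b ^ m - p ^ m) := by
    rw [← hp]; abel
  rw [hrw]
  exact (primeRadical R).sub_mem hbp h2

end Aux

open Polynomial

theorem stronglyPeriodic_iff_no_commute (R : Type*) [Ring R] :
    StronglyPeriodicRing R ↔ ∀ a : R, ∃ p : R, IsPotent p ∧ a - p ∈ primeRadical R := by
  constructor
  · exact fun h a => (h a).imp fun p hp => ⟨hp.1, hp.2.1⟩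
  · intro hyp a
    obtain ⟨m, hm2, hz⟩ := exists_sub_pow_mem hyp a
    obtain ⟨n, hn1, hzn⟩ := primeRadical_nilpotent hz
    -- finite characteristic
    obtain ⟨m₂, hm₂, h2⟩ := exists_sub_pow_mem hyp (2 : R)
    set N : ℕ := 2 ^ m₂ - 2 with hN
    have h4 : (2 : ℕ) ≤ 2 ^ m₂ := by
      calc (2 : ℕ) ≤ 2 ^ 1 := by norm_num
      _ ≤ 2 ^ m₂ := Nat.pow_le_pow_right (by omega) (by omega)
    have hN2 : 2 ≤ N := by
      have : (4 : ℕ) ≤ 2 ^ m₂ := by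
        calc (4 : ℕ) = 2 ^ 2 := rfl
        _ ≤ 2 ^ m₂ := Nat.pow_le_pow_right (by omega) hm₂
      omega
    have hNR : (N : R) ∈ primeRadical R := by
      have hcast : ((N : ℕ) : R) = -((2 : R) - (2 : R) ^ m₂) := by
        rw [hN, Nat.cast_sub h4, neg_sub]
        push_cast
        norm_num
      rw [hcast]
      exact (primeRadical R).neg_mem h2
    obtain ⟨t, ht1, hNt⟩ := primeRadical_nilpotent hNR
    have hc : ((N ^ t : ℕ) : R) = 0 := by push_cast; exact hNt
    have hc0 : N ^ t ≠ 0 := by positivity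
    -- R is a finite `ZMod`-algebra at `a`
    have hdvd : ringChar R ∣ N ^ t := (CharP.cast_eq_zero_iff R (ringChar R) _).mp hc
    haveI : NeZero (ringChar R) := ⟨fun h => hc0 (by rwa [h, zero_dvd_iff] at hdvd)⟩
    letI : Algebra (ZMod (ringChar R)) R := ZMod.algebra R (ringChar R)
    have hmonic : (((X : (ZMod (ringChar R))[X]) ^ m - X) ^ n).Monic := by
      refine Polynomial.Monic.pow ?_ n
      refine Polynomial.monic_X_pow_sub ?_
      calc (X : (ZMod (ringChar R))[X]).degree ≤ 1 := Polynomial.degree_X_le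
      _ < (m : WithBot ℕ) := by exact_mod_cast (by omega : (1 : ℕ) < m)
    have heval : Polynomial.aeval a ((((X : (ZMod (ringChar R))[X]) ^ m - X)) ^ n) = 0 := by
      simp only [map_pow, map_sub, Polynomial.aeval_X_pow, Polynomial.aeval_X]
      have hneg : a ^ m - a = -(a - a ^ m) := (neg_sub a (a ^ m)).symm
      rw [hneg, neg_pow, hzn, mul_zero]
    have hint : IsIntegral (ZMod (ringChar R)) a :=
      ⟨_, hmonic, by rw [← Polynomial.aeval_def]; exact heval⟩
    have hfg := hint.fg_adjoin_singleton
    haveI : Module.Finite (ZMod (ringChar R)) (Algebra.adjoin (ZMod (ringChar R)) {a}) :=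
      ⟨(Submodule.fg_top _).mpr hfg⟩
    haveI : Finite (Algebra.adjoin (ZMod (ringChar R)) {a}) :=
      Module.finite_of_finite (ZMod (ringChar R))
    -- powers of `a` eventually repeat
    have haA : a ∈ Algebra.adjoin (ZMod (ringChar R)) {a} :=
      Algebra.self_mem_adjoin_singleton _ a
    obtain ⟨k, l, hkl, hpow⟩ := Finite.exists_ne_map_eq_of_infinite
      (fun k : ℕ => (⟨a, haA⟩ : Algebra.adjoin (ZMod (ringChar R)) {a}) ^ (k + 1))
    have hpowR : a ^ (k + 1) = a ^ (l + 1) := by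
      have := congrArg Subtype.val hpow
      simpa using this
    obtain ⟨i, d, hi1, hd1, hper⟩ :
        ∃ i d : ℕ, 1 ≤ i ∧ 1 ≤ d ∧ a ^ i = a ^ (i + d) := by
      rcases lt_or_gt_of_ne hkl with h | h
      · exact ⟨k + 1, l - k, by omega, by omega, by rw [hpowR]; congr 1; omega⟩
      · exact ⟨l + 1, k - l, by omega, by omega, by rw [← hpowR]; congr 1; omega⟩
    have step : ∀ k' : ℕ, i ≤ k' → a ^ k' = a ^ (k' + d) := by
      intro k' hk'
      have h1 : a ^ k' = a ^ (k' - i) * a ^ i := by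
        rw [← pow_add]; congr 1; omega
      rw [h1, hper, ← pow_add]
      congr 1; omega
    have period : ∀ s k' : ℕ, i ≤ k' → a ^ k' = a ^ (k' + s * d) := by
      intro s
      induction s with
      | zero => simp
      | succ s ih =>
        intro k' hk'
        rw [ih k' hk', step (k' + s * d) (by omega)]
        congr 1; ring
    set K : ℕ := (m - 1) * (d * i) with hK
    have hiK : i ≤ K := by
      calc i = 1 * (1 * i) := by ring
      _ ≤ (m - 1) * (d * i) := Nat.mul_le_mul (by omega) (Nat.mul_le_mul (by omega) le_rfl)
    refine ⟨a ^ (K + 1), ⟨d + 1, by omega, ?_⟩, ?_, ?_⟩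
    · -- potency
      rw [← pow_mul]
      have hexp : (K + 1) * (d + 1) = (K + 1) + (K + 1) * d := by ring
      rw [hexp]
      exact period (K + 1) (K + 1) (by omega)
    · -- a - a^(K+1) ∈ primeRadical R
      have mem : ∀ s : ℕ, a - a ^ (1 + s * (m - 1)) ∈ primeRadical R := by
        intro s
        induction s with
        | zero => simpa using (primeRadical R).zero_mem
        | succ s ih =>
          have e1 : a * a ^ (m - 1) = a ^ m := by
            rw [← pow_succ']; congr 1; omega
          have e2 : a ^ (1 + s * (m - 1)) * a ^ (m - 1) = a ^ (1 + (s + 1) * (m - 1)) := by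
            rw [← pow_add]; congr 1; ring
          have expand : a - a ^ (1 + (s + 1) * (m - 1)) =
              (a - a ^ m) + (a - a ^ (1 + s * (m - 1))) * a ^ (m - 1) := by
            rw [sub_mul, e1, e2]; abel
          rw [expand]
          exact (primeRadical R).add_mem hz ((primeRadical R).mul_mem_right _ _ ih)
      have hexp : K + 1 = 1 + (d * i) * (m - 1) := by rw [hK]; ring
      rw [hexp]
      exact mem (d * i)
    · -- commuting
      rw [← pow_succ, ← pow_succ']
end

section
/- A ring R is strongly periodic if and only if R is a 2-primal weakly periodic ring, where 2-primal means N(R) = P(R) and weakly periodic means every element is the sum of a potent element and a nilpotent element. -/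
namespace StrongPeriodicAux

variable {R : Type*} [Ring R]

/-- Sum of terms `r * a * s` over a list of pairs `(r, s)`. -/
def mulSum (a : R) (l : List (R × R)) : R := (l.map fun q => q.1 * a * q.2).sum

lemma mulSum_nil (a : R) : mulSum a ([] : List (R × R)) = 0 := rfl

lemma mulSum_cons (a : R) (q : R × R) (l : List (R × R)) :
    mulSum a (q :: l) = q.1 * a * q.2 + mulSum a l := by
  simp [mulSum]

lemma mulSum_append (a : R) (l l' : List (R × R)) :
    mulSum a (l ++ l') = mulSum a l + mulSum a l' := by
  simp [mulSum]

lemma mul_mulSum (a c : R) (l : List (R × R)) :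
    c * mulSum a l = mulSum a (l.map fun q => (c * q.1, q.2)) := by
  induction l with
  | nil => simp [mulSum]
  | cons q l ih => simp [mulSum_cons, mul_add, ih, mul_assoc]

lemma mulSum_mul (a c : R) (l : List (R × R)) :
    mulSum a l * c = mulSum a (l.map fun q => (q.1, q.2 * c)) := by
  induction l with
  | nil => simp [mulSum]
  | cons q l ih => simp [mulSum_cons, add_mul, ih, mul_assoc]

/-- The two-sided ideal `M + ⟨a⟩`. -/
def extend (M : TwoSidedIdeal R) (a : R) : TwoSidedIdeal R :=
  TwoSidedIdeal.mk' {y | ∃ m ∈ (M : Set R), ∃ l : List (R × R), y = m + mulSum a l}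
    ⟨0, M.zero_mem, [], by simp [mulSum_nil]⟩
    (by
      rintro x y ⟨m, hm, l, rfl⟩ ⟨m', hm', l', rfl⟩
      exact ⟨m + m', M.add_mem hm hm', l ++ l', by rw [mulSum_append]; abel⟩)
    (by
      rintro x ⟨m, hm, l, rfl⟩
      refine ⟨-m, M.neg_mem hm, l.map fun q => (-q.1, q.2), ?_⟩
      have : mulSum a (l.map fun q => (-q.1, q.2))
          = mulSum a (l.map fun q => ((-1 : R) * q.1, q.2)) := by
        simp [neg_mul]
      rw [this, ← mul_mulSum, neg_add, neg_one_mul])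
    (by
      rintro x y ⟨m, hm, l, rfl⟩
      exact ⟨x * m, M.mul_mem_left _ _ hm, l.map fun q => (x * q.1, q.2), by
        rw [mul_add, mul_mulSum]⟩)
    (by
      rintro x y ⟨m, hm, l, rfl⟩
      exact ⟨m * y, M.mul_mem_right _ _ hm, l.map fun q => (q.1, q.2 * y), by
        rw [add_mul, mulSum_mul]⟩)

lemma mem_extend {M : TwoSidedIdeal R} {a y : R} :
    y ∈ extend M a ↔ ∃ m ∈ (M : Set R), ∃ l : List (R × R), y = m + mulSum a l := by
  simp [extend, TwoSidedIdeal.mem_mk']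

lemma le_extend (M : TwoSidedIdeal R) (a : R) : M ≤ extend M a := by
  intro y hy
  exact mem_extend.mpr ⟨y, hy, [], by simp [mulSum_nil]⟩

lemma self_mem_extend (M : TwoSidedIdeal R) (a : R) : a ∈ extend M a :=
  mem_extend.mpr ⟨0, M.zero_mem, [(1, 1)], by simp [mulSum]⟩

lemma term_mul_mulSum_mem {M : TwoSidedIdeal R} {a b : R}
    (hab : ∀ r : R, a * r * b ∈ M) (u v : R) (l : List (R × R)) :
    (u * a * v) * mulSum b l ∈ M := by
  induction l with
  | nil => simpa [mulSum_nil] using M.zero_mem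
  | cons q l ih =>
    rw [mulSum_cons, mul_add]
    refine M.add_mem ?_ ih
    have h : u * a * v * (q.1 * b * q.2) = u * ((a * (v * q.1) * b) * q.2) := by
      simp [mul_assoc]
    rw [h]
    exact M.mul_mem_left _ _ (M.mul_mem_right _ _ (hab (v * q.1)))

lemma mulSum_mul_mulSum_mem {M : TwoSidedIdeal R} {a b : R}
    (hab : ∀ r : R, a * r * b ∈ M) (l₁ l₂ : List (R × R)) :
    mulSum a l₁ * mulSum b l₂ ∈ M := by
  induction l₁ with
  | nil => simpa [mulSum_nil] using M.zero_mem
  | cons q l ih =>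
    rw [mulSum_cons, add_mul]
    exact M.add_mem (term_mul_mulSum_mem hab _ _ _) ih

lemma mul_mem_of_mem_extend {M : TwoSidedIdeal R} {a b y z : R}
    (hab : ∀ r : R, a * r * b ∈ M) (hy : y ∈ extend M a) (hz : z ∈ extend M b) :
    y * z ∈ M := by
  obtain ⟨m₁, hm₁, l₁, rfl⟩ := mem_extend.mp hy
  obtain ⟨m₂, hm₂, l₂, rfl⟩ := mem_extend.mp hz
  have : (m₁ + mulSum a l₁) * (m₂ + mulSum b l₂)
      = m₁ * (m₂ + mulSum b l₂) + mulSum a l₁ * m₂ + mulSum a l₁ * mulSum b l₂ := by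
    noncomm_ring
  rw [this]
  exact M.add_mem (M.add_mem (M.mul_mem_right _ _ hm₁) (M.mul_mem_left _ _ hm₂))
    (mulSum_mul_mulSum_mem hab l₁ l₂)

/-- For a non-nilpotent element there is a prime two-sided ideal avoiding it. -/
lemma exists_prime_not_mem {x : R} (hx : ¬ IsNilpotent x) :
    ∃ M : TwoSidedIdeal R, M.IsPrime ∧ x ∉ M := by
  have hxk : ∀ k : ℕ, x ^ (k + 1) ≠ 0 := fun k h => hx ⟨k + 1, h⟩
  set S : Set (TwoSidedIdeal R) := {I | ∀ k : ℕ, x ^ (k + 1) ∉ I} with hS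
  have hbot : (⊥ : TwoSidedIdeal R) ∈ S := by
    intro k hk
    exact hxk k hk
  have hub : ∀ c ⊆ S, IsChain (· ≤ ·) c → ∀ y ∈ c, ∃ ub ∈ S, ∀ z ∈ c, z ≤ ub := by
    intro c hcS hchain y hyc
    refine ⟨TwoSidedIdeal.mk' (⋃ I ∈ c, (I : Set R)) ?_ ?_ ?_ ?_ ?_, ?_, ?_⟩
    · exact Set.mem_biUnion hyc y.zero_mem
    · rintro u v hu hv
      simp only [Set.mem_iUnion] at hu hv ⊢
      obtain ⟨I, hI, hu⟩ := hu
      obtain ⟨J, hJ, hv⟩ := hv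
      rcases hchain.total hI hJ with h | h
      · exact ⟨J, hJ, J.add_mem (h hu) hv⟩
      · exact ⟨I, hI, I.add_mem hu (h hv)⟩
    · rintro u hu
      simp only [Set.mem_iUnion] at hu ⊢
      obtain ⟨I, hI, hu⟩ := hu
      exact ⟨I, hI, I.neg_mem hu⟩
    · rintro u v hv
      simp only [Set.mem_iUnion] at hv ⊢
      obtain ⟨I, hI, hv⟩ := hv
      exact ⟨I, hI, I.mul_mem_left _ _ hv⟩
    · rintro u v hu
      simp only [Set.mem_iUnion] at hu ⊢
      obtain ⟨I, hI, hu⟩ := hu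
      exact ⟨I, hI, I.mul_mem_right _ _ hu⟩
    · intro k hk
      rw [TwoSidedIdeal.mem_mk'] at hk
      simp only [Set.mem_iUnion] at hk
      obtain ⟨I, hI, hk⟩ := hk
      exact hcS hI k hk
    · intro I hI
      intro u hu
      rw [TwoSidedIdeal.mem_mk']
      exact Set.mem_biUnion hI hu
  obtain ⟨M, -, hMS, hMmax⟩ := zorn_le_nonempty₀ S hub ⊥ hbot
  · refine ⟨M, ⟨?_, ?_⟩, fun hxM => hMS 0 (by simpa using hxM)⟩
    · intro h
      exact hMS 0 (by
        have : x ^ 1 ∈ (M : Set R) := h ▸ Set.mem_univ _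
        simpa using this)
    · intro a b hab
      by_contra hcon
      push_neg at hcon
      obtain ⟨ha, hb⟩ := hcon
      have hJa : extend M a ∉ S := by
        intro hJ
        have hle := hMmax hJ (le_extend M a)
        exact ha (hle (self_mem_extend M a))
      have hJb : extend M b ∉ S := by
        intro hJ
        have hle := hMmax hJ (le_extend M b)
        exact hb (hle (self_mem_extend M b))
      simp only [hS, Set.mem_setOf_eq, not_forall, not_not] at hJa hJb
      obtain ⟨i, hi⟩ := hJa
      obtain ⟨j, hj⟩ := hJb
      have : x ^ (i + 1) * x ^ (j + 1) ∈ M := mul_mem_of_mem_extend hab hi hj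
      rw [← pow_add] at this
      have h2 : x ^ (i + j + 1 + 1) ∈ M := by
        have e : i + j + 1 + 1 = i + 1 + (j + 1) := by omega
        rw [e]
        exact this
      exact hMS (i + j + 1) h2

/-- A potent nilpotent element is zero. -/
lemma potent_eq_zero_of_nilpotent {p : R} (hp : IsPotent p) (hn : IsNilpotent p) : p = 0 := by
  obtain ⟨m, hm, hpm⟩ := hp
  obtain ⟨t, ht⟩ := hn
  obtain ⟨d, rfl⟩ : ∃ d, m = d + 2 := ⟨m - 2, by omega⟩
  have key : ∀ k : ℕ, p = p ^ (k * (d + 1) + 1) := by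
    intro k
    induction k with
    | zero => simp
    | succ k ih =>
      have : p ^ ((k + 1) * (d + 1) + 1) = p ^ (k * (d + 1) + 1) * p ^ (d + 1) := by
        rw [← pow_add]
        ring_nf
      rw [this, ← ih, ← pow_succ']
      rw [show d + 1 + 1 = d + 2 from rfl, ← hpm]
  have := key t
  rw [show t * (d + 1) + 1 = t + (t * d + 1) by ring, pow_add, ht, zero_mul] at this
  exact this

/-- `(p + u)^k - p^k ∈ P` whenever `u ∈ P`. -/
lemma pow_add_sub_pow_mem (P : TwoSidedIdeal R) {p u : R} (hu : u ∈ P) (k : ℕ) :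
    (p + u) ^ k - p ^ k ∈ P := by
  induction k with
  | zero => simpa using P.zero_mem
  | succ k ih =>
    have hid : (p + u) ^ (k + 1) - p ^ (k + 1)
        = ((p + u) ^ k - p ^ k) * (p + u) + p ^ k * u := by
      rw [pow_succ, pow_succ, sub_mul, mul_add (p ^ k) p u]
      abel
    rw [hid]
    exact P.add_mem (P.mul_mem_right _ _ ih) (P.mul_mem_left _ _ hu)

/-- From exact periodicity `a^i = a^j`, construct a commuting potent `p` with `a - p` nilpotent. -/
lemma exists_potent_of_pow_eq_pow {a : R} {i j : ℕ} (hi : 1 ≤ i) (hij : i < j)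
    (heq : a ^ i = a ^ j) : ∃ p : R, IsPotent p ∧ IsNilpotent (a - p) ∧ a * p = p * a := by
  obtain ⟨d, rfl⟩ : ∃ d, j = i + (d + 1) := ⟨j - i - 1, by omega⟩
  set d1 : ℕ := d + 1 with hd1
  have hper : ∀ t, i ≤ t → a ^ t = a ^ (t + d1) := by
    intro t ht
    obtain ⟨r, rfl⟩ := Nat.exists_eq_add_of_le ht
    rw [show i + r + d1 = (i + d1) + r by ring, pow_add, pow_add, heq]
  have hperm : ∀ t r, i ≤ t → a ^ t = a ^ (t + r * d1) := by
    intro t r ht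
    induction r with
    | zero => simp
    | succ r ih =>
      rw [ih, show t + (r + 1) * d1 = t + r * d1 + d1 by ring]
      exact hper (t + r * d1) (by omega)
  set s : ℕ := i * d1 with hs
  have hsi : i ≤ s := by
    have : i * 1 ≤ i * d1 := Nat.mul_le_mul_left i (by omega)
    omega
  have hidem : a ^ s * a ^ s = a ^ s := by
    rw [← pow_add, show s + s = s + i * d1 from by rw [hs]]
    exact (hperm s i hsi).symm
  refine ⟨a ^ (s + 1), ⟨d1 + 1, by omega, ?_⟩, ?_, ((Commute.refl a).pow_right (s + 1)).eq⟩
  · rw [← pow_mul, show (s + 1) * (d1 + 1) = (s + 1) + (s + 1) * d1 by ring]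
    exact hperm (s + 1) (s + 1) (by omega)
  · refine ⟨s + 1, ?_⟩
    have hfac : a - a ^ (s + 1) = a * (1 - a ^ s) := by
      rw [mul_sub, mul_one]
      congr 1
      rw [pow_succ']
    have hcom : Commute a (1 - a ^ s) :=
      (Commute.one_right a).sub_right ((Commute.refl a).pow_right s)
    rw [hfac, hcom.mul_pow]
    have hone : ∀ r : ℕ, (1 - a ^ s) ^ (r + 1) = 1 - a ^ s := by
      intro r
      induction r with
      | zero => rw [pow_one]
      | succ r ih =>
        rw [pow_succ, ih, sub_mul, one_mul, mul_sub, mul_one, hidem, sub_self, sub_zero]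
    rw [hone s, mul_sub, mul_one, ← pow_add]
    have hp2 := hperm (s + 1) i (by omega)
    rw [show s + 1 + s = s + 1 + i * d1 from by rw [hs], ← hp2, sub_self]

end StrongPeriodicAux

theorem stronglyPeriodic_iff_twoPrimal_weaklyPeriodic (R : Type*) [Ring R] :
    StronglyPeriodicRing R ↔
      ({x : R | IsNilpotent x} = (primeRadical R : Set R) ∧
        ∀ a : R, ∃ p : R, IsPotent p ∧ IsNilpotent (a - p)) := by
  constructor
  · intro hSP
    have hPN : ∀ x : R, x ∈ primeRadical R → IsNilpotent x := by
      intro x hx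
      by_contra hnx
      obtain ⟨M, hM, hxM⟩ := StrongPeriodicAux.exists_prime_not_mem hnx
      have hle : primeRadical R ≤ M :=
        sInf_le (show M ∈ {P : TwoSidedIdeal R | P.IsPrime} from hM)
      exact hxM (hle hx)
    have hNP2 : ∀ x : R, IsNilpotent x → x ∈ primeRadical R := by
      intro x hx
      obtain ⟨p, hpot, hxp, hcomm⟩ := hSP x
      have hunil : IsNilpotent (x - p) := hPN _ hxp
      have hcom2 : Commute x (x - p) := (Commute.refl x).sub_right hcomm
      have hpnil : IsNilpotent p := by
        have h := hcom2.isNilpotent_sub hx hunil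
        rw [sub_sub_cancel] at h
        exact h
      have hp0 : p = 0 := StrongPeriodicAux.potent_eq_zero_of_nilpotent hpot hpnil
      rw [hp0, sub_zero] at hxp
      exact hxp
    refine ⟨Set.ext fun x => ⟨fun h => hNP2 x h, fun h => hPN x h⟩, ?_⟩
    intro a
    obtain ⟨p, hpot, hap, -⟩ := hSP a
    exact ⟨p, hpot, hPN _ hap⟩
  · rintro ⟨hNP, hWP⟩
    have memP : ∀ {x : R}, IsNilpotent x → x ∈ primeRadical R := by
      intro x hx
      have h : x ∈ {y : R | IsNilpotent y} := hx
      rw [hNP] at h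
      exact h
    have nilP : ∀ {x : R}, x ∈ primeRadical R → IsNilpotent x := by
      intro x hx
      have h : x ∈ (primeRadical R : Set R) := hx
      rw [← hNP] at h
      exact h
    by_cases hTriv : (1 : R) = 0
    · intro a
      have ha : ∀ y : R, y = 0 := fun y => by
        calc y = y * 1 := (mul_one y).symm
        _ = y * 0 := by rw [hTriv]
        _ = 0 := mul_zero y
      refine ⟨0, ⟨2, le_refl 2, by simp⟩, ?_, by simp⟩
      rw [show a - 0 = 0 from by rw [ha (a - 0)]]
      exact (primeRadical R).zero_mem
    intro a
    -- Step A : for every b there is m ≥ 2 with b - b ^ m ∈ P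
    have hA : ∀ b : R, ∃ m : ℕ, 2 ≤ m ∧ b - b ^ m ∈ primeRadical R := by
      intro b
      obtain ⟨p, ⟨m, hm2, hpm⟩, hbp⟩ := hWP b
      refine ⟨m, hm2, ?_⟩
      have h1 : b - p ∈ primeRadical R := memP hbp
      have h2 : b ^ m - p ^ m ∈ primeRadical R := by
        have h := StrongPeriodicAux.pow_add_sub_pow_mem (primeRadical R) (p := p) h1 m
        rw [show p + (b - p) = b from by abel] at h
        exact h
      have h3 := (primeRadical R).sub_mem h1 h2
      rw [show b - p - (b ^ m - p ^ m) = b - b ^ m - (p - p ^ m) from by abel,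
        ← hpm, sub_self, sub_zero] at h3
      exact h3
    obtain ⟨m, hm2, hw⟩ := hA a
    obtain ⟨e, rfl⟩ : ∃ e, m = e + 2 := ⟨m - 2, by omega⟩
    -- hw : a - a ^ (e + 2) ∈ P
    have hstep : ∀ t : ℕ, a ^ (t + 1) - a ^ (t + (e + 2)) ∈ primeRadical R := by
      intro t
      have h := (primeRadical R).mul_mem_left (a ^ t) _ hw
      rw [mul_sub, ← pow_succ, ← pow_add] at h
      exact h
    have hshift : ∀ t k : ℕ, a ^ (t + 1) - a ^ (t + 1 + k * (e + 1)) ∈ primeRadical R := by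
      intro t k
      induction k with
      | zero => simpa using (primeRadical R).zero_mem
      | succ k ih =>
        have h2 := hstep (t + k * (e + 1))
        rw [show t + k * (e + 1) + 1 = t + 1 + k * (e + 1) by ring,
          show t + k * (e + 1) + (e + 2) = t + 1 + (k + 1) * (e + 1) by ring] at h2
        have h3 := (primeRadical R).add_mem ih h2
        rwa [sub_add_sub_cancel] at h3
    -- torsion
    obtain ⟨m', hm'2, hz⟩ := hA ((2 : ℕ) • a ^ (e + 1))
    obtain ⟨f, rfl⟩ : ∃ f, m' = f + 2 := ⟨m' - 2, by omega⟩
    set n : ℕ := 2 ^ (f + 2) - 2 with hn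
    have hn2 : 2 ≤ n := by
      have h4 : 2 ^ 2 ≤ 2 ^ (f + 2) := Nat.pow_le_pow_right (by norm_num) (by omega)
      simp only [hn]
      omega
    rw [show ((2 : ℕ) • a ^ (e + 1)) ^ (f + 2)
        = (2 ^ (f + 2) : ℕ) • a ^ ((e + 1) * (f + 2)) from by rw [smul_pow, ← pow_mul]] at hz
    have hcyc : a ^ (e + 1) - a ^ ((e + 1) * (f + 2)) ∈ primeRadical R := by
      have h := hshift e (f + 1)
      rwa [show e + 1 + (f + 1) * (e + 1) = (e + 1) * (f + 2) by ring] at h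
    have hbig : n • a ^ (e + 1) ∈ primeRadical R := by
      have h1 : (2 ^ (f + 2) : ℕ) • (a ^ (e + 1) - a ^ ((e + 1) * (f + 2))) ∈ primeRadical R :=
        (primeRadical R).nsmul_mem _ hcyc
      have h2 := (primeRadical R).sub_mem h1 hz
      rw [show (2 ^ (f + 2) : ℕ) • (a ^ (e + 1) - a ^ ((e + 1) * (f + 2)))
          - ((2 : ℕ) • a ^ (e + 1) - (2 ^ (f + 2) : ℕ) • a ^ ((e + 1) * (f + 2)))
          = (2 ^ (f + 2) : ℕ) • a ^ (e + 1) - (2 : ℕ) • a ^ (e + 1) from by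
        rw [smul_sub]; abel] at h2
      have e5 : n • a ^ (e + 1)
          = (2 ^ (f + 2) : ℕ) • a ^ (e + 1) - (2 : ℕ) • a ^ (e + 1) := by
        rw [show (2 ^ (f + 2) : ℕ) = n + 2 from by omega, add_nsmul]
        abel
      rw [e5]
      exact h2
    have hna : n • a ∈ primeRadical R := by
      have h1 : (n • a ^ (e + 1)) * a ∈ primeRadical R :=
        (primeRadical R).mul_mem_right _ _ hbig
      rw [show (n • a ^ (e + 1)) * a = n • a ^ (e + 2) from by
        rw [smul_mul_assoc, ← pow_succ]] at h1
      have h2 : n • (a - a ^ (e + 2)) ∈ primeRadical R := (primeRadical R).nsmul_mem _ hw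
      have h3 := (primeRadical R).add_mem h2 h1
      rwa [smul_sub, sub_add_cancel] at h3
    -- nilpotency exponents
    obtain ⟨c₀, hc₀⟩ := nilP hna
    have hc0pos : c₀ ≠ 0 := by
      intro h
      rw [h, pow_zero] at hc₀
      exact hTriv hc₀
    obtain ⟨c, rfl⟩ : ∃ c, c₀ = c + 1 := ⟨c₀ - 1, by omega⟩
    set K : ℕ := c + 1 with hKdef
    set Nn : ℕ := n ^ K with hNn
    have hNnpos : 0 < Nn := Nat.pow_pos (by omega)
    have hkillBase : Nn • a ^ K = 0 := by
      rw [hNn, ← smul_pow]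
      exact hc₀
    have hkill : ∀ k, K ≤ k → Nn • a ^ k = 0 := by
      intro k hk
      obtain ⟨r, rfl⟩ := Nat.exists_eq_add_of_le hk
      rw [pow_add, ← smul_mul_assoc, hkillBase, zero_mul]
    obtain ⟨ν₀, hν₀⟩ := nilP hw
    have hν0pos : ν₀ ≠ 0 := by
      intro h
      rw [h, pow_zero] at hν₀
      exact hTriv hν₀
    obtain ⟨ν', rfl⟩ : ∃ t, ν₀ = t + 1 := ⟨ν₀ - 1, by omega⟩
    set ν : ℕ := ν' + 1 with hνdef
    -- the key polynomial relation
    have hx : Commute a ((1 : R) - a ^ (e + 1)) :=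
      (Commute.one_right a).sub_right ((Commute.refl a).pow_right (e + 1))
    have hfact : a - a ^ (e + 2) = a * ((1 : R) - a ^ (e + 1)) := by
      rw [mul_sub, mul_one]
      congr 1
      rw [pow_succ']
    have hbase : a ^ ν * ((1 : R) - a ^ (e + 1)) ^ ν = 0 := by
      rw [← hx.mul_pow, ← hfact]
      exact hν₀
    have hrel0 : ∀ s : ℕ, a ^ (ν + s) * ((1 : R) - a ^ (e + 1)) ^ ν = 0 := by
      intro s
      rw [show ν + s = s + ν by ring, pow_add, mul_assoc, hbase, mul_zero]
    have hexp : ((1 : R) - a ^ (e + 1)) ^ ν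
        = ∑ k ∈ Finset.range (ν + 1), (-(a ^ (e + 1))) ^ k * (ν.choose k : R) := by
      rw [sub_eq_neg_add, (Commute.one_right (-(a ^ (e + 1)))).add_pow]
      simp only [one_pow, mul_one]
    have hS0 : ∀ s : ℕ,
        a ^ (ν + s) * (∑ k' ∈ Finset.range ν, (-(a ^ (e + 1))) ^ k' * (ν.choose k' : R))
          + a ^ (ν + s) * (-(a ^ (e + 1))) ^ ν = 0 := by
      intro s
      have h0 := hrel0 s
      rw [hexp, Finset.sum_range_succ, Nat.choose_self, Nat.cast_one, mul_one, mul_add] at h0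
      exact h0
    obtain ⟨D, hD⟩ : ∃ D, D = (e + 1) * ν := ⟨_, rfl⟩
    have hDpos : 0 < D := hD ▸ Nat.mul_pos (Nat.succ_pos e) (Nat.succ_pos ν')
    obtain ⟨K', hK'ν, hK'K⟩ : ∃ K', ν ≤ K' ∧ K ≤ K' := ⟨ν + K, by omega, by omega⟩
    set gens : Set R := (fun j : ℕ => a ^ (K' + j)) '' Set.Iio D with hgens
    have hgfin : gens.Finite := (Set.finite_Iio D).image _
    set G : AddSubgroup R := AddSubgroup.closure gens with hGdef
    have hGtor : ∀ y ∈ G, Nn • y = 0 := by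
      have hle : G ≤ AddSubgroup.mk
          ⟨⟨{y : R | Nn • y = 0}, by
              intro x y hx' hy'
              simp only [Set.mem_setOf_eq] at *
              rw [smul_add, hx', hy', add_zero]⟩, by simp⟩
          (by
            intro x hx'
            simp only [Set.mem_setOf_eq] at *
            rw [smul_neg, hx', neg_zero]) := by
        rw [hGdef]
        apply AddSubgroup.closure_le _ |>.mpr
        rintro y ⟨j, hj, rfl⟩
        have : Nn • a ^ (K' + j) = 0 := hkill _ (by omega)
        exact this
      intro y hy
      exact hle hy
    have hGfin : Finite G := by
      haveI := hgfin.to_subtype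
      haveI : AddGroup.FG G := by
        rw [hGdef]
        infer_instance
      apply AddCommGroup.finite_of_fg_torsion
      intro g
      rw [isOfFinAddOrder_iff_nsmul_eq_zero]
      refine ⟨Nn, hNnpos, ?_⟩
      have h := hGtor g.1 g.2
      ext
      simpa using h
    have hmemG : ∀ k, K' ≤ k → a ^ k ∈ G := by
      intro k
      induction k using Nat.strong_induction_on with
      | _ k ih =>
        intro hk
        by_cases hkD : k < K' + D
        · apply AddSubgroup.subset_closure
          refine ⟨k - K', by simp only [Set.mem_Iio]; omega, ?_⟩
          show a ^ (K' + (k - K')) = a ^ k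
          congr 1
          omega
        · push_neg at hkD
          obtain ⟨s, hks⟩ : ∃ s, k = ν + s + (e + 1) * ν := by
            refine ⟨k - ν - D, ?_⟩
            rw [← hD]
            omega
          have h0 := hS0 s
          have hxν : a ^ (ν + s) * (-(a ^ (e + 1))) ^ ν = ((-1 : ℤ) ^ ν) • a ^ k := by
            rw [show (-(a ^ (e + 1))) ^ ν = ((-1 : ℤ) ^ ν) • (a ^ (e + 1)) ^ ν from by
                rw [← smul_pow, neg_one_zsmul],
              mul_smul_comm, ← pow_mul, ← pow_add, ← hks]
          rw [hxν] at h0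
          have h2 : ((-1 : ℤ) ^ ν) • a ^ k
              = -(a ^ (ν + s) * ∑ k' ∈ Finset.range ν,
                  (-(a ^ (e + 1))) ^ k' * (ν.choose k' : R)) :=
            eq_neg_of_add_eq_zero_right h0
          have hsum : a ^ (ν + s) * (∑ k' ∈ Finset.range ν,
              (-(a ^ (e + 1))) ^ k' * (ν.choose k' : R)) ∈ G := by
            rw [Finset.mul_sum]
            refine AddSubgroup.sum_mem _ ?_
            intro k' hk'
            have hk'ν : k' < ν := Finset.mem_range.mp hk'
            have hlt : (e + 1) * k' < (e + 1) * ν :=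
              mul_lt_mul_of_pos_left hk'ν (Nat.succ_pos e)
            have hterm : a ^ (ν + s) * ((-(a ^ (e + 1))) ^ k' * (ν.choose k' : R))
                = ((-1 : ℤ) ^ k') • ((ν.choose k') • a ^ (ν + s + (e + 1) * k')) := by
              rw [show (-(a ^ (e + 1))) ^ k' = ((-1 : ℤ) ^ k') • (a ^ (e + 1)) ^ k' from by
                  rw [← smul_pow, neg_one_zsmul],
                smul_mul_assoc, ← (Nat.cast_commute (ν.choose k') ((a ^ (e + 1)) ^ k')).eq,
                ← nsmul_eq_mul, mul_smul_comm, mul_smul_comm, ← pow_mul, ← pow_add]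
            rw [hterm]
            refine AddSubgroup.zsmul_mem _ (AddSubgroup.nsmul_mem _ ?_ _) _
            exact ih _ (by omega) (by omega)
          have hfin : a ^ k = ((-1 : ℤ) ^ ν) • (((-1 : ℤ) ^ ν) • a ^ k) := by
            rw [smul_smul, ← pow_add, ← two_mul, pow_mul]
            norm_num
          rw [hfin, h2]
          exact AddSubgroup.zsmul_mem _ (AddSubgroup.neg_mem _ hsum) _
    obtain ⟨k₁, k₂, hne, heqG⟩ := Finite.exists_ne_map_eq_of_infinite
      (fun t : ℕ => (⟨a ^ (K' + t), hmemG _ (Nat.le_add_right _ _)⟩ : G))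
    have heq' : a ^ (K' + k₁) = a ^ (K' + k₂) := congrArg Subtype.val heqG
    have hK'pos : 1 ≤ K' := by omega
    have hfinal : ∃ p : R, IsPotent p ∧ IsNilpotent (a - p) ∧ a * p = p * a := by
      rcases Nat.lt_or_ge k₁ k₂ with hlt | hge
      · exact StrongPeriodicAux.exists_potent_of_pow_eq_pow (a := a)
          (i := K' + k₁) (j := K' + k₂) (by omega) (by omega) heq'
      · have hlt2 : k₂ < k₁ := by omega
        exact StrongPeriodicAux.exists_potent_of_pow_eq_pow (a := a)
          (i := K' + k₂) (j := K' + k₁) (by omega) (by omega) heq'.symm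
    obtain ⟨p, hpot, hnil, hcomm⟩ := hfinal
    exact ⟨p, hpot, memP hnil, hcomm⟩
end

section
/- A ring R is strongly periodic if and only if the quotient R/P(R) is a potent ring (every element x of R/P(R) satisfies x = x^n for some n ≥ 2). -/
section Aux

variable {R : Type*} [Ring R]

private lemma mem_iff_coe_eq_zero (I : TwoSidedIdeal R) (x : R) :
    x ∈ I ↔ (x : I.ringCon.Quotient) = 0 := by
  rw [TwoSidedIdeal.mem_iff, ← RingCon.eq, RingCon.coe_zero]

/-- Every element of the prime radical is nilpotent. -/
private lemma isNilpotent_of_mem_primeRadical {x : R} (hx : x ∈ primeRadical R) :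
    IsNilpotent x := by
  by_contra hnil
  have hpow : ∀ n : ℕ, x ^ n ≠ 0 := fun n h => hnil ⟨n, h⟩
  set S : Set (TwoSidedIdeal R) := {I | ∀ n : ℕ, x ^ n ∉ I} with hSdef
  have hbot : (⊥ : TwoSidedIdeal R) ∈ S := fun n hn => hpow n ((TwoSidedIdeal.mem_bot R).1 hn)
  have hub : ∀ c ⊆ S, IsChain (· ≤ ·) c → ∀ y ∈ c, ∃ ub ∈ S, ∀ z ∈ c, z ≤ ub := by
    intro c hcS hchain J hJc
    have hzero : (0:R) ∈ ⋃ I ∈ c, (I : Set R) :=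
      Set.mem_biUnion hJc J.zero_mem
    have hadd : ∀ {p q : R}, p ∈ (⋃ I ∈ c, (I : Set R)) → q ∈ (⋃ I ∈ c, (I : Set R)) →
        p + q ∈ (⋃ I ∈ c, (I : Set R)) := by
      intro p q hp hq
      simp only [Set.mem_iUnion, SetLike.mem_coe, exists_prop] at hp hq ⊢
      obtain ⟨I, hI, hpI⟩ := hp
      obtain ⟨I', hI', hqI⟩ := hq
      rcases eq_or_ne I I' with rfl | hne
      · exact ⟨I, hI, I.add_mem hpI hqI⟩
      · rcases hchain hI hI' hne with h | h
        · exact ⟨I', hI', I'.add_mem (h hpI) hqI⟩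
        · exact ⟨I, hI, I.add_mem hpI (h hqI)⟩
    have hneg : ∀ {p : R}, p ∈ (⋃ I ∈ c, (I : Set R)) → -p ∈ (⋃ I ∈ c, (I : Set R)) := by
      intro p hp
      simp only [Set.mem_iUnion, SetLike.mem_coe, exists_prop] at hp ⊢
      obtain ⟨I, hI, hpI⟩ := hp
      exact ⟨I, hI, I.neg_mem hpI⟩
    have hml : ∀ {r p : R}, p ∈ (⋃ I ∈ c, (I : Set R)) → r * p ∈ (⋃ I ∈ c, (I : Set R)) := by
      intro r p hp
      simp only [Set.mem_iUnion, SetLike.mem_coe, exists_prop] at hp ⊢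
      obtain ⟨I, hI, hpI⟩ := hp
      exact ⟨I, hI, I.mul_mem_left r p hpI⟩
    have hmr : ∀ {p r : R}, p ∈ (⋃ I ∈ c, (I : Set R)) → p * r ∈ (⋃ I ∈ c, (I : Set R)) := by
      intro p r hp
      simp only [Set.mem_iUnion, SetLike.mem_coe, exists_prop] at hp ⊢
      obtain ⟨I, hI, hpI⟩ := hp
      exact ⟨I, hI, I.mul_mem_right p r hpI⟩
    refine ⟨TwoSidedIdeal.mk' (⋃ I ∈ c, (I : Set R)) hzero hadd hneg hml hmr, ?_, ?_⟩
    · intro n hn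
      rw [TwoSidedIdeal.mem_mk'] at hn
      simp only [Set.mem_iUnion, SetLike.mem_coe, exists_prop] at hn
      obtain ⟨I, hI, hxI⟩ := hn
      exact hcS hI n hxI
    · intro I hI
      rw [TwoSidedIdeal.le_iff, TwoSidedIdeal.coe_mk']
      exact Set.subset_biUnion_of_mem hI
  obtain ⟨M, -, hMS, hMmax⟩ := zorn_le_nonempty₀ S hub ⊥ hbot
  -- M is a prime ideal
  have hone : (1:R) ∉ M := by
    have := hMS 0
    rwa [pow_zero] at this
  have hMprime : M.IsPrime := by
    refine ⟨?_, ?_⟩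
    · intro h
      exact hone (by rw [← SetLike.mem_coe, h]; trivial)
    · intro b₁ b₂ hb
      by_contra hcon
      push_neg at hcon
      obtain ⟨hb₁, hb₂⟩ := hcon
      -- the enlargement of M by b
      let gen : R → Set R := fun b => (M : Set R) ∪ {y | ∃ r s : R, y = r * b * s}
      let A : R → AddSubgroup R := fun b => AddSubgroup.closure (gen b)
      have hml : ∀ (b r : R) {y : R}, y ∈ A b → r * y ∈ A b := by
        intro b r y hy
        induction hy using AddSubgroup.closure_induction with
        | mem z hz =>
          rcases hz with hz | ⟨r', s', rfl⟩
          · exact AddSubgroup.subset_closure (Or.inl (M.mul_mem_left r z hz))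
          · exact AddSubgroup.subset_closure (Or.inr ⟨r * r', s', by noncomm_ring⟩)
        | zero => rw [mul_zero]; exact (A b).zero_mem
        | add p q hp hq hp' hq' => rw [mul_add]; exact (A b).add_mem hp' hq'
        | neg p hp hp' => rw [mul_neg]; exact (A b).neg_mem hp'
      have hmr : ∀ (b r : R) {y : R}, y ∈ A b → y * r ∈ A b := by
        intro b r y hy
        induction hy using AddSubgroup.closure_induction with
        | mem z hz =>
          rcases hz with hz | ⟨r', s', rfl⟩
          · exact AddSubgroup.subset_closure (Or.inl (M.mul_mem_right z r hz))
          · exact AddSubgroup.subset_closure (Or.inr ⟨r', s' * r, by noncomm_ring⟩)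
        | zero => rw [zero_mul]; exact (A b).zero_mem
        | add p q hp hq hp' hq' => rw [add_mul]; exact (A b).add_mem hp' hq'
        | neg p hp hp' => rw [neg_mul]; exact (A b).neg_mem hp'
      let J : R → TwoSidedIdeal R := fun b =>
        TwoSidedIdeal.mk' (A b) (A b).zero_mem (fun hp hq => (A b).add_mem hp hq)
          (fun hp => (A b).neg_mem hp) (fun hy => hml b _ hy) (fun hy => hmr b _ hy)
      have hmemJ : ∀ (b y : R), y ∈ J b ↔ y ∈ A b := by
        intro b y
        exact TwoSidedIdeal.mem_mk' _ _ _ _ _ _ y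
      have hMJ : ∀ b, M ≤ J b := by
        intro b y hy
        rw [hmemJ]
        exact AddSubgroup.subset_closure (Or.inl hy)
      have hbJ : ∀ b, b ∈ J b := by
        intro b
        rw [hmemJ]
        exact AddSubgroup.subset_closure (Or.inr ⟨1, 1, by rw [one_mul, mul_one]⟩)
      -- J b contains some power of x for b ∉ M
      have hxJ : ∀ b, b ∉ M → ∃ i : ℕ, x ^ i ∈ A b := by
        intro b hbM
        by_contra hJS
        push_neg at hJS
        have hJmem : J b ∈ S := by
          intro n hn
          rw [hmemJ] at hn
          exact hJS n hn
        exact hbM (hMmax hJmem (hMJ b) (hbJ b))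
      obtain ⟨i, hi⟩ := hxJ b₁ hb₁
      obtain ⟨j, hj⟩ := hxJ b₂ hb₂
      -- product of the two enlargements lies in M
      have hstep1 : ∀ v ∈ A b₂, ∀ u ∈ gen b₁, u * v ∈ M := by
        intro v hv
        induction hv using AddSubgroup.closure_induction with
        | mem z hz =>
          intro u hu
          rcases hz with hz | ⟨r', s', rfl⟩
          · exact M.mul_mem_left u z hz
          · rcases hu with hu | ⟨r, s, rfl⟩
            · exact M.mul_mem_right _ _ hu
            · have heq : r * b₁ * s * (r' * b₂ * s') = r * (b₁ * (s * r') * b₂) * s' := by noncomm_ring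
              rw [heq]
              exact M.mul_mem_right _ _ (M.mul_mem_left _ _ (hb (s * r')))
        | zero => intro u hu; rw [mul_zero]; exact M.zero_mem
        | add p q hp hq hp' hq' =>
          intro u hu; rw [mul_add]; exact M.add_mem (hp' u hu) (hq' u hu)
        | neg p hp hp' => intro u hu; rw [mul_neg]; exact M.neg_mem (hp' u hu)
      have hstep2 : ∀ u ∈ A b₁, ∀ v ∈ A b₂, u * v ∈ M := by
        intro u hu
        induction hu using AddSubgroup.closure_induction with
        | mem z hz => intro v hv; exact hstep1 v hv z hz
        | zero => intro v hv; rw [zero_mul]; exact M.zero_mem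
        | add p q hp hq hp' hq' =>
          intro v hv; rw [add_mul]; exact M.add_mem (hp' v hv) (hq' v hv)
        | neg p hp hp' => intro v hv; rw [neg_mul]; exact M.neg_mem (hp' v hv)
      have hfin : x ^ (i + j) ∈ M := by
        rw [pow_add]
        exact hstep2 _ hi _ hj
      exact hMS (i + j) hfin
  -- conclude
  have hle : primeRadical R ≤ M := sInf_le hMprime
  have hxM : x ∈ M := hle hx
  have h1 := hMS 1
  rw [pow_one] at h1
  exact h1 hxM

private lemma dvd_choose_mul_factorial (N k i : ℕ) (hN : 0 < N) (h1 : 1 ≤ i) (h2 : i ≤ k) :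
    N ∣ (N * k.factorial).choose i := by
  set d := N * k.factorial with hd
  have hd1 : 0 < d := Nat.mul_pos hN k.factorial_pos
  obtain ⟨q, hq⟩ := Nat.dvd_factorial h1 h2
  obtain ⟨i', rfl⟩ : ∃ i', i = i' + 1 := ⟨i - 1, by omega⟩
  obtain ⟨d', hd'⟩ : ∃ d', d = d' + 1 := ⟨d - 1, by omega⟩
  have h := Nat.add_one_mul_choose_eq d' i'
  rw [hd']
  have key : (N * (q * d'.choose i')) * (i' + 1) = (d' + 1).choose (i' + 1) * (i' + 1) := by
    rw [← h, ← hd', hd, hq]; ring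
  have hcan := Nat.eq_of_mul_eq_mul_right (Nat.succ_pos i') key
  exact ⟨q * d'.choose i', hcan.symm⟩

private lemma one_sub_pow_eq {A : Type*} [CommRing A] (y : A) (k : ℕ) :
    ∃ g : A, 1 - (1 - y) ^ k = y * g := by
  induction k with
  | zero => exact ⟨0, by simp⟩
  | succ k ih =>
    obtain ⟨g, hg⟩ := ih
    exact ⟨g + (1 - y) ^ k, by linear_combination hg⟩

/-- The key commutative-algebra lemma: in a commutative ring of positive characteristic,
if `(a - a ^ n) ^ k = 0` then `a` differs from a potent element by a multiple of `a - a ^ n`. -/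
private lemma potent_approx {A : Type*} [CommRing A] (a : A) {n k N : ℕ}
    (hn : 2 ≤ n) (hk : 1 ≤ k) (hN : 1 ≤ N)
    (hz : (a - a ^ n) ^ k = 0) (hchar : ((N : ℕ) : A) = 0) :
    ∃ p c : A, ∃ m : ℕ, 2 ≤ m ∧ p = p ^ m ∧ a - p = (a - a ^ n) * c := by
  obtain ⟨n₁, rfl⟩ : ∃ n₁, n = n₁ + 1 := ⟨n - 1, by omega⟩
  have hn₁ : 1 ≤ n₁ := by omega
  obtain ⟨t0, ht0⟩ : ∃ t0 : A, t0 = 1 - a ^ n₁ := ⟨_, rfl⟩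
  have hza : a - a ^ (n₁ + 1) = a * t0 := by rw [ht0]; ring
  have hak : a ^ k * t0 ^ k = 0 := by rw [← mul_pow, ← hza]; exact hz
  obtain ⟨g, hg⟩ := one_sub_pow_eq (a ^ n₁) k
  obtain ⟨u, hu⟩ : ∃ u : A, u = 1 - t0 ^ k := ⟨_, rfl⟩
  have hug : u = a ^ n₁ * g := by rw [hu, ht0]; exact hg
  have haku : a ^ k * u = a ^ k := by rw [hu, mul_sub, mul_one, hak, sub_zero]
  obtain ⟨e, he⟩ : ∃ e : A, e = u ^ k := ⟨_, rfl⟩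
  obtain ⟨b, hb⟩ : ∃ b, n₁ * k = b + k :=
    ⟨n₁ * k - k, by have := Nat.le_mul_of_pos_left k (show 0 < n₁ by omega); omega⟩
  have heb : e = a ^ b * (a ^ k * g ^ k) := by
    rw [he, hug, mul_pow, ← pow_mul, hb, pow_add]; ring
  have hue : u * e = e := by
    calc u * e = a ^ b * (a ^ k * u * g ^ k) := by rw [heb]; ring
    _ = a ^ b * (a ^ k * g ^ k) := by rw [haku]
    _ = e := heb.symm
  have hte : t0 ^ k * e = 0 := by
    calc t0 ^ k * e = a ^ b * (a ^ k * t0 ^ k * g ^ k) := by rw [heb]; ring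
    _ = 0 := by rw [hak]; ring
  have hje : ∀ j : ℕ, u ^ j * e = e := by
    intro j
    induction j with
    | zero => rw [pow_zero, one_mul]
    | succ j ih => rw [pow_succ, mul_assoc, hue, ih]
  have hee : e * e = e := by
    have h := hje k
    rwa [← he] at h
  have hepow : ∀ j : ℕ, 1 ≤ j → e ^ j = e := by
    intro j hj
    induction j with
    | zero => omega
    | succ j ih =>
      rcases Nat.eq_zero_or_pos j with rfl | hj'
      · rw [pow_one]
      · rw [pow_succ, ih hj', hee]
  obtain ⟨t, htdef⟩ : ∃ t : A, t = a ^ n₁ * e - e := ⟨_, rfl⟩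
  have htk : t ^ k = 0 := by
    have h1 : t = (-t0) * e := by rw [htdef, ht0]; ring
    rw [h1, mul_pow, neg_pow, hepow k hk, mul_assoc, hte, mul_zero]
  obtain ⟨d, hddef⟩ : ∃ d : ℕ, d = N * k.factorial := ⟨_, rfl⟩
  have hd1 : 1 ≤ d := by rw [hddef]; exact Nat.mul_pos (by omega) (Nat.factorial_pos k)
  have hNA : ∀ (c : ℕ), N ∣ c → ((c : ℕ) : A) = 0 := by
    rintro c ⟨q, rfl⟩
    push_cast
    rw [hchar, zero_mul]
  have hed : (e + t) ^ d = e := by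
    rw [add_pow, Finset.sum_eq_single d]
    · rw [Nat.sub_self, pow_zero, mul_one, Nat.choose_self, Nat.cast_one, mul_one, hepow d hd1]
    · intro i hi hne
      have hiled : i ≤ d := Nat.lt_succ_iff.1 (Finset.mem_range.1 hi)
      have hilt : i < d := lt_of_le_of_ne hiled hne
      by_cases hjk : k ≤ d - i
      · have htj : t ^ (d - i) = 0 := by
          obtain ⟨j', hj'⟩ : ∃ j', d - i = k + j' := ⟨d - i - k, by omega⟩
          rw [hj', pow_add, htk, zero_mul]
        rw [htj, mul_zero, zero_mul]
      · have hdvd : N ∣ d.choose i := by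
          have h1 : d.choose i = d.choose (d - i) := (Nat.choose_symm hiled).symm
          have h2 := dvd_choose_mul_factorial N k (d - i) (by omega) (by omega) (by omega)
          rw [← hddef] at h2
          rw [h1]
          exact h2
        rw [hNA _ hdvd, mul_zero]
    · intro h
      exact absurd (Finset.self_mem_range_succ d) h
  refine ⟨a * e, t0 ^ (k - 1) * (∑ i ∈ Finset.range k, u ^ i), n₁ * d + 1, ?_, ?_, ?_⟩
  · have := Nat.mul_pos (show 0 < n₁ by omega) (show 0 < d by omega)
    omega
  · -- potency
    have hpn₁ : (a * e) ^ n₁ = e + t := by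
      rw [mul_pow, hepow n₁ hn₁, htdef]; ring
    rw [pow_succ, pow_mul, hpn₁, hed]
    linear_combination (-a) * hee
  · -- the difference
    obtain ⟨k', rfl⟩ : ∃ k', k = k' + 1 := ⟨k - 1, by omega⟩
    have hgeom : (∑ i ∈ Finset.range (k' + 1), u ^ i) * (u - 1) = u ^ (k' + 1) - 1 :=
      geom_sum_mul u (k' + 1)
    have h2 : 1 - u = t0 ^ (k' + 1) := by rw [hu]; ring
    have h1 : 1 - u ^ (k' + 1) =
        t0 ^ (k' + 1) * (∑ i ∈ Finset.range (k' + 1), u ^ i) := by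
      linear_combination hgeom + (∑ i ∈ Finset.range (k' + 1), u ^ i) * h2
    calc a - a * e = a * (1 - u ^ (k' + 1)) := by rw [he]; ring
    _ = a * (t0 ^ (k' + 1) * (∑ i ∈ Finset.range (k' + 1), u ^ i)) := by rw [h1]
    _ = (a * t0) * (t0 ^ (k' + 1 - 1) * (∑ i ∈ Finset.range (k' + 1), u ^ i)) := by
        rw [Nat.add_sub_cancel]; ring
    _ = (a - a ^ (n₁ + 1)) * (t0 ^ (k' + 1 - 1) * (∑ i ∈ Finset.range (k' + 1), u ^ i)) := by
        rw [hza]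

end Aux

theorem stronglyPeriodic_iff_quotient_potent (R : Type*) [Ring R] :
    StronglyPeriodicRing R ↔
      ∀ x : (primeRadical R).ringCon.Quotient, ∃ n : ℕ, 2 ≤ n ∧ x = x ^ n := by
  constructor
  · intro h x
    obtain ⟨a, rfl⟩ := Quot.exists_rep x
    have hxa : Quot.mk _ a = ((a : R) : (primeRadical R).ringCon.Quotient) := rfl
    rw [hxa]
    obtain ⟨p, ⟨m, hm, hp⟩, hsub, -⟩ := h a
    refine ⟨m, hm, ?_⟩
    have h1 : ((a : R) : (primeRadical R).ringCon.Quotient) = ((p : R) : _) := by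
      rw [← sub_eq_zero, ← RingCon.coe_sub]
      exact (mem_iff_coe_eq_zero _ _).1 hsub
    rw [h1, ← RingCon.coe_pow, ← hp]
  · intro H a
    -- characteristic considerations
    obtain ⟨m₂, hm₂, h₂⟩ := H ((2 : R) : (primeRadical R).ringCon.Quotient)
    have hw : ((2 : R) ^ m₂ - 2) ∈ primeRadical R := by
      rw [mem_iff_coe_eq_zero, RingCon.coe_sub, RingCon.coe_pow, ← h₂, sub_self]
    obtain ⟨k₂, hk₂⟩ := isNilpotent_of_mem_primeRadical hw
    have h4 : (4:ℕ) ≤ 2 ^ m₂ := by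
      calc (4:ℕ) = 2 ^ 2 := rfl
      _ ≤ 2 ^ m₂ := Nat.pow_le_pow_right (by norm_num) hm₂
    set N : ℕ := (2 ^ m₂ - 2) ^ (k₂ + 1) with hNdef
    have hcast : ((2 ^ m₂ - 2 : ℕ) : R) = (2 : R) ^ m₂ - 2 := by
      rw [Nat.cast_sub (by omega), Nat.cast_pow]; norm_num
    have hNR : ((N : ℕ) : R) = 0 := by
      rw [hNdef, Nat.cast_pow, hcast, pow_succ, hk₂, zero_mul]
    have hN1 : 1 ≤ N := Nat.one_le_pow _ _ (by omega)
    haveI : NeZero N := ⟨by omega⟩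
    -- the element a
    obtain ⟨n, hn, hxn⟩ := H ((a : R) : (primeRadical R).ringCon.Quotient)
    have hzP : a - a ^ n ∈ primeRadical R := by
      rw [mem_iff_coe_eq_zero, RingCon.coe_sub, RingCon.coe_pow, ← hxn, sub_self]
    obtain ⟨k₀, hk₀⟩ := isNilpotent_of_mem_primeRadical hzP
    have hzk : (a - a ^ n) ^ (k₀ + 1) = 0 := by rw [pow_succ, hk₀, zero_mul]
    -- the generic model: polynomials over ZMod N modulo the obvious relation
    set k : ℕ := k₀ + 1 with hkdef
    set q : Polynomial (ZMod N) :=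
      ((Polynomial.X : Polynomial (ZMod N)) - Polynomial.X ^ n) ^ k with hqdef
    set I : Ideal (Polynomial (ZMod N)) := Ideal.span {q} with hIdef
    set mk : Polynomial (ZMod N) →+* (Polynomial (ZMod N) ⧸ I) := Ideal.Quotient.mk I with hmk
    have hzB : (mk Polynomial.X - (mk Polynomial.X) ^ n) ^ k = 0 := by
      rw [← map_pow, ← map_sub, ← map_pow, Ideal.Quotient.eq_zero_iff_mem]
      exact Ideal.subset_span (Set.mem_singleton q)
    have hcharB : ((N : ℕ) : Polynomial (ZMod N) ⧸ I) = 0 := by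
      rw [← map_natCast mk N, ← map_natCast (Polynomial.C : ZMod N →+* Polynomial (ZMod N)) N,
        ZMod.natCast_self, map_zero, map_zero]
    obtain ⟨p, c, m, hm2, hpot, hsub⟩ :=
      potent_approx (mk Polynomial.X) hn (by omega) hN1 hzB hcharB
    obtain ⟨P, hP⟩ := Ideal.Quotient.mk_surjective p
    obtain ⟨Q, hQ⟩ := Ideal.Quotient.mk_surjective c
    obtain ⟨F, hF⟩ : ∃ F : Polynomial (ZMod N), F * q = P - P ^ m := by
      rw [← Ideal.mem_span_singleton', ← hIdef, ← Ideal.Quotient.eq_zero_iff_mem]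
      show mk _ = 0
      rw [map_sub, map_pow, hP, ← hpot, sub_self]
    obtain ⟨G, hG⟩ : ∃ G : Polynomial (ZMod N),
        G * q = Polynomial.X - P - (Polynomial.X - Polynomial.X ^ n) * Q := by
      rw [← Ideal.mem_span_singleton', ← hIdef, ← Ideal.Quotient.eq_zero_iff_mem]
      show mk _ = 0
      rw [map_sub, map_sub, map_mul, map_sub, map_pow, hP, hQ, hsub, sub_self]
    -- evaluation at a
    have hMdvd : ringChar R ∣ N := (CharP.cast_eq_zero_iff R (ringChar R) N).mp hNR
    set φ : ZMod N →+* R := ZMod.castHom hMdvd R with hφ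
    have hφcomm : ∀ z : ZMod N, Commute (φ z) a := by
      intro z
      have hzv : ((z.val : ℕ) : ZMod N) = z := ZMod.natCast_rightInverse z
      rw [← hzv, map_natCast]
      exact Nat.cast_commute _ _
    set ev : Polynomial (ZMod N) →+* R := Polynomial.eval₂RingHom' φ a hφcomm with hev
    have hevX : ev Polynomial.X = a := Polynomial.eval₂_X φ a
    have hevq : ev q = 0 := by
      rw [hqdef, map_pow, map_sub, map_pow, hevX, hkdef]
      exact hzk
    have hcommP : ∀ P' : Polynomial (ZMod N), Commute a (ev P') := by
      intro P'
      induction P' using Polynomial.induction_on with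
      | C b =>
        rw [show ev (Polynomial.C b) = φ b from Polynomial.eval₂_C φ a]
        exact (hφcomm b).symm
      | add f g hf hg => rw [map_add]; exact hf.add_right hg
      | monomial i b ih =>
        rw [pow_succ, ← mul_assoc, map_mul, hevX]
        exact ih.mul_right (Commute.refl a)
    refine ⟨ev P, ⟨m, hm2, ?_⟩, ?_, ?_⟩
    · have h := congrArg ev hF
      rw [map_mul, hevq, mul_zero, map_sub, map_pow] at h
      exact sub_eq_zero.mp h.symm
    · have h := congrArg ev hG
      rw [map_mul, hevq, mul_zero, map_sub, map_sub, map_mul, map_sub, map_pow, hevX] at h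
      have h2 : a - ev P = (a - a ^ n) * ev Q := sub_eq_zero.mp h.symm
      rw [h2]
      exact TwoSidedIdeal.mul_mem_right _ _ _ hzP
    · exact hcommP P
end

section
/- Every subring of a strongly periodic ring is strongly periodic. -/
section StronglyNilpotent

variable {R : Type*} [Ring R]

/-- An element is strongly nilpotent if every "m-sequence" starting at it eventually hits 0. -/
def SNilp (x : R) : Prop :=
  ∀ f : ℕ → R, f 0 = x → (∀ n, ∃ r, f (n + 1) = f n * r * f n) → ∃ n, f n = 0

lemma SNilp.pow2 {x : R} (h : SNilp x) : ∃ k : ℕ, x ^ 2 ^ k = 0 := by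
  obtain ⟨n, hn⟩ := h (fun n => x ^ 2 ^ n) (by simp)
    (fun n => ⟨1, by
      show x ^ 2 ^ (n + 1) = x ^ 2 ^ n * 1 * x ^ 2 ^ n
      rw [mul_one, ← pow_add, pow_succ, mul_two]⟩)
  exact ⟨n, hn⟩

/-- The generating set for the two-sided span of `a`. -/
def sgen (a : R) : Set R := {y : R | ∃ s t : R, y = s * a * t}

lemma mul_left_mem_cl (a r : R) {u : R} (hu : u ∈ AddSubgroup.closure (sgen a)) :
    r * u ∈ AddSubgroup.closure (sgen a) := by
  induction hu using AddSubgroup.closure_induction with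
  | mem x hx =>
    obtain ⟨s, t, rfl⟩ := hx
    exact AddSubgroup.subset_closure ⟨r * s, t, by simp [mul_assoc]⟩
  | zero => simpa using AddSubgroup.zero_mem _
  | add x y hx hy ihx ihy => rw [mul_add]; exact AddSubgroup.add_mem _ ihx ihy
  | neg x hx ih => rw [mul_neg]; exact AddSubgroup.neg_mem _ ih

lemma mul_right_mem_cl (a r : R) {u : R} (hu : u ∈ AddSubgroup.closure (sgen a)) :
    u * r ∈ AddSubgroup.closure (sgen a) := by
  induction hu using AddSubgroup.closure_induction with
  | mem x hx =>
    obtain ⟨s, t, rfl⟩ := hx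
    exact AddSubgroup.subset_closure ⟨s, t * r, by simp [mul_assoc]⟩
  | zero => simpa using AddSubgroup.zero_mem _
  | add x y hx hy ihx ihy => rw [add_mul]; exact AddSubgroup.add_mem _ ihx ihy
  | neg x hx ih => rw [neg_mul]; exact AddSubgroup.neg_mem _ ih

lemma gen_mul_cl_mem {P : TwoSidedIdeal R} {a b : R} (hab : ∀ r : R, a * r * b ∈ P)
    (s t : R) {v : R} (hv : v ∈ AddSubgroup.closure (sgen b)) (r : R) :
    s * a * t * r * v ∈ P := by
  induction hv using AddSubgroup.closure_induction with
  | mem y hy =>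
    obtain ⟨s', t', rfl⟩ := hy
    have h3 := P.mul_mem_right (s * (a * (t * r * s') * b)) t'
      (P.mul_mem_left s _ (hab (t * r * s')))
    have e : s * a * t * r * (s' * b * t') = s * (a * (t * r * s') * b) * t' := by
      simp only [mul_assoc]
    rw [e]; exact h3
  | zero => simpa using P.zero_mem
  | add x y hx hy ihx ihy => rw [mul_add]; exact P.add_mem ihx ihy
  | neg x hx ih => rw [mul_neg]; exact P.neg_mem ih

lemma cl_mul_cl_mem {P : TwoSidedIdeal R} {a b : R} (hab : ∀ r : R, a * r * b ∈ P)
    {u v : R} (hu : u ∈ AddSubgroup.closure (sgen a)) (hv : v ∈ AddSubgroup.closure (sgen b))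
    (r : R) : u * r * v ∈ P := by
  induction hu using AddSubgroup.closure_induction with
  | mem x hx =>
    obtain ⟨s, t, rfl⟩ := hx
    exact gen_mul_cl_mem hab s t hv r
  | zero => simpa using P.zero_mem
  | add x y hx hy ihx ihy => rw [add_mul, add_mul]; exact P.add_mem ihx ihy
  | neg x hx ih => rw [neg_mul, neg_mul]; exact P.neg_mem ih

/-- The two-sided ideal `P + ⟨a⟩`. -/
def Jext (P : TwoSidedIdeal R) (a : R) : TwoSidedIdeal R :=
  TwoSidedIdeal.mk' {x : R | ∃ p ∈ P, x - p ∈ AddSubgroup.closure (sgen a)}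
    ⟨0, P.zero_mem, by simpa using AddSubgroup.zero_mem _⟩
    (fun {x y} hx hy => by
      obtain ⟨p, hp, hxp⟩ := hx
      obtain ⟨q, hq, hyq⟩ := hy
      exact ⟨p + q, P.add_mem hp hq, by
        rw [show x + y - (p + q) = (x - p) + (y - q) by abel]
        exact AddSubgroup.add_mem _ hxp hyq⟩)
    (fun {x} hx => by
      obtain ⟨p, hp, hxp⟩ := hx
      exact ⟨-p, P.neg_mem hp, by
        rw [show -x - -p = -(x - p) by abel]
        exact AddSubgroup.neg_mem _ hxp⟩)
    (fun {x y} hy => by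
      obtain ⟨p, hp, hyp⟩ := hy
      exact ⟨x * p, P.mul_mem_left x p hp, by
        rw [show x * y - x * p = x * (y - p) by rw [mul_sub]]
        exact mul_left_mem_cl a x hyp⟩)
    (fun {x y} hx => by
      obtain ⟨p, hp, hxp⟩ := hx
      exact ⟨p * y, P.mul_mem_right p y hp, by
        rw [show x * y - p * y = (x - p) * y by rw [sub_mul]]
        exact mul_right_mem_cl a y hxp⟩)

lemma mem_Jext {P : TwoSidedIdeal R} {a x : R} :
    x ∈ Jext P a ↔ ∃ p ∈ P, x - p ∈ AddSubgroup.closure (sgen a) :=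
  TwoSidedIdeal.mem_mk' _ _ _ _ _ _ _

lemma le_Jext (P : TwoSidedIdeal R) (a : R) : P ≤ Jext P a := by
  rw [TwoSidedIdeal.le_iff]
  intro x hx
  exact mem_Jext.mpr ⟨x, hx, by simpa using AddSubgroup.zero_mem _⟩

lemma self_mem_Jext (P : TwoSidedIdeal R) (a : R) : a ∈ Jext P a :=
  mem_Jext.mpr ⟨0, P.zero_mem, by
    rw [sub_zero]
    exact AddSubgroup.subset_closure ⟨1, 1, by rw [one_mul, mul_one]⟩⟩

/-- The union of a nonempty chain of two-sided ideals. -/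
def unionIdeal (c : Set (TwoSidedIdeal R)) (hchain : IsChain (· ≤ ·) c) (hne : c.Nonempty) :
    TwoSidedIdeal R :=
  TwoSidedIdeal.mk' (⋃ I ∈ c, (I : Set R))
    (by obtain ⟨I, hI⟩ := hne; exact Set.mem_iUnion₂.mpr ⟨I, hI, I.zero_mem⟩)
    (fun {x y} hx hy => by
      obtain ⟨I, hI, hxI⟩ := Set.mem_iUnion₂.mp hx
      obtain ⟨J, hJ, hyJ⟩ := Set.mem_iUnion₂.mp hy
      rcases hchain.total hI hJ with h | h
      · exact Set.mem_iUnion₂.mpr ⟨J, hJ, J.add_mem (TwoSidedIdeal.le_iff.mp h hxI) hyJ⟩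
      · exact Set.mem_iUnion₂.mpr ⟨I, hI, I.add_mem hxI (TwoSidedIdeal.le_iff.mp h hyJ)⟩)
    (fun {x} hx => by
      obtain ⟨I, hI, hxI⟩ := Set.mem_iUnion₂.mp hx
      exact Set.mem_iUnion₂.mpr ⟨I, hI, I.neg_mem hxI⟩)
    (fun {x y} hy => by
      obtain ⟨I, hI, hyI⟩ := Set.mem_iUnion₂.mp hy
      exact Set.mem_iUnion₂.mpr ⟨I, hI, I.mul_mem_left x y hyI⟩)
    (fun {x y} hx => by
      obtain ⟨I, hI, hxI⟩ := Set.mem_iUnion₂.mp hx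
      exact Set.mem_iUnion₂.mpr ⟨I, hI, I.mul_mem_right x y hxI⟩)

lemma mem_unionIdeal {c : Set (TwoSidedIdeal R)} {hchain : IsChain (· ≤ ·) c}
    {hne : c.Nonempty} {x : R} :
    x ∈ unionIdeal c hchain hne ↔ ∃ I ∈ c, x ∈ I := by
  rw [unionIdeal, TwoSidedIdeal.mem_mk']
  simp

/-- Every element of the prime radical is strongly nilpotent. -/
lemma snilp_of_mem_primeRadical {x : R} (hx : x ∈ primeRadical R) : SNilp x := by
  intro f hf0 hstep
  by_contra hcon
  push_neg at hcon
  have upstep : ∀ (I : TwoSidedIdeal R) (i : ℕ), f i ∈ I → ∀ j, i ≤ j → f j ∈ I := by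
    intro I i hi j hij
    induction j, hij using Nat.le_induction with
    | base => exact hi
    | succ n hn ih =>
      obtain ⟨r, hr⟩ := hstep n
      rw [hr]
      exact I.mul_mem_left _ _ ih
  have hbot : (⊥ : TwoSidedIdeal R) ∈ {I : TwoSidedIdeal R | ∀ n, f n ∉ I} :=
    fun n hn => hcon n ((TwoSidedIdeal.mem_bot _).mp hn)
  obtain ⟨P, -, hPmax⟩ := zorn_le_nonempty₀ {I : TwoSidedIdeal R | ∀ n, f n ∉ I}
    (fun c hcF hchain y hy => by
      refine ⟨unionIdeal c hchain ⟨y, hy⟩, ?_, ?_⟩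
      · intro n hn
        obtain ⟨I, hI, hnI⟩ := mem_unionIdeal.mp hn
        exact hcF hI n hnI
      · intro z hz
        rw [TwoSidedIdeal.le_iff]
        intro w hw
        exact mem_unionIdeal.mpr ⟨z, hz, hw⟩) ⊥ hbot
  have hPF : ∀ n, f n ∉ P := hPmax.1
  have hPprime : P.IsPrime := by
    constructor
    · intro h
      exact hPF 0 (by rw [← SetLike.mem_coe, h]; trivial)
    · intro a b hab
      by_contra hcon2
      push_neg at hcon2
      obtain ⟨ha, hb⟩ := hcon2
      have hJa : ∃ i, f i ∈ Jext P a := by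
        by_contra hJ
        push_neg at hJ
        have hle : Jext P a ≤ P := hPmax.2 (fun n hn => hJ n hn) (le_Jext P a)
        exact ha (TwoSidedIdeal.le_iff.mp hle (self_mem_Jext P a))
      have hJb : ∃ i, f i ∈ Jext P b := by
        by_contra hJ
        push_neg at hJ
        have hle : Jext P b ≤ P := hPmax.2 (fun n hn => hJ n hn) (le_Jext P b)
        exact hb (TwoSidedIdeal.le_iff.mp hle (self_mem_Jext P b))
      obtain ⟨i, hi⟩ := hJa
      obtain ⟨j, hj⟩ := hJb
      have hNa : f (max i j) ∈ Jext P a := upstep _ i hi _ (le_max_left i j)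
      have hNb : f (max i j) ∈ Jext P b := upstep _ j hj _ (le_max_right i j)
      obtain ⟨r, hr⟩ := hstep (max i j)
      refine hPF (max i j + 1) ?_
      rw [hr]
      obtain ⟨p, hp, hup⟩ := mem_Jext.mp hNa
      obtain ⟨q, hq, hvq⟩ := mem_Jext.mp hNb
      have e : f (max i j) * r * f (max i j) =
          p * (r * f (max i j)) + ((f (max i j) - p) * r * q
            + (f (max i j) - p) * r * (f (max i j) - q)) := by
        noncomm_ring
      rw [e]
      exact P.add_mem (P.mul_mem_right p _ hp)
        (P.add_mem (P.mul_mem_left _ q hq) (cl_mul_cl_mem hab hup hvq r))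
  have hx' : x ∈ sInf {P : TwoSidedIdeal R | P.IsPrime} := hx
  exact hPF 0 (hf0 ▸ (TwoSidedIdeal.mem_sInf _).mp hx' P hPprime)

/-- An element of a subring that is strongly nilpotent in the big ring lies in the prime
radical of the subring. -/
lemma mem_primeRadical_subring {S : Subring R} {x : S} (hx : SNilp (x : R)) :
    x ∈ primeRadical S := by
  have hall : ∀ P ∈ {P : TwoSidedIdeal S | P.IsPrime}, x ∈ P := by
    intro P hP
    by_contra hxP
    have step : ∀ y : S, y ∉ P → ∃ r : S, y * r * y ∉ P := by
      intro y hy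
      by_contra h
      push_neg at h
      rcases hP.2 y y h with h' | h' <;> exact hy h'
    let g : ℕ → {y : S // y ∉ P} := fun n => Nat.rec ⟨x, hxP⟩
      (fun _ prev => ⟨prev.1 * (step prev.1 prev.2).choose * prev.1,
        (step prev.1 prev.2).choose_spec⟩) n
    obtain ⟨n, hn⟩ := hx (fun n => ((g n).1 : R)) rfl
      (fun n => ⟨((step (g n).1 (g n).2).choose : S), rfl⟩)
    refine (g n).2 ?_
    have hz : (g n).1 = 0 := Subtype.ext hn
    rw [hz]
    exact P.zero_mem
  show x ∈ sInf {P : TwoSidedIdeal S | P.IsPrime}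
  exact (TwoSidedIdeal.mem_sInf _).mpr hall

end StronglyNilpotent

section CommMachine

variable {A : Type*} [CommRing A]

/-- Lifting idempotents along a nilpotent. -/
lemma idemLift : ∀ (k : ℕ) (f : A), (f ^ 2 - f) ^ 2 ^ k = 0 →
    ∃ e c : A, e ^ 2 = e ∧ e - f = (f ^ 2 - f) * c := by
  intro k
  induction k with
  | zero =>
    intro f hf
    simp only [pow_zero, pow_one] at hf
    exact ⟨f, 0, by rw [sub_eq_zero.mp hf], by rw [sub_self, mul_zero]⟩
  | succ k ih =>
    intro f hf
    have hgk : ((3 * f ^ 2 - 2 * f ^ 3) ^ 2 - (3 * f ^ 2 - 2 * f ^ 3)) ^ 2 ^ k = 0 := by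
      have hg : (3 * f ^ 2 - 2 * f ^ 3) ^ 2 - (3 * f ^ 2 - 2 * f ^ 3)
          = (f ^ 2 - f) ^ 2 * ((2 * f - 1) ^ 2 - 4) := by ring
      rw [hg, mul_pow, ← pow_mul]
      rw [show 2 * 2 ^ k = 2 ^ (k + 1) by rw [pow_succ, mul_comm], hf, zero_mul]
    obtain ⟨e, c, he, hec⟩ := ih (3 * f ^ 2 - 2 * f ^ 3) hgk
    refine ⟨e, (f ^ 2 - f) * ((2 * f - 1) ^ 2 - 4) * c + (1 - 2 * f), he, ?_⟩
    linear_combination hec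

lemma binom_aux (z : A) : ∀ K : ℕ, ∃ c : A, (1 + z) ^ K = 1 + (K : A) * z + z ^ 2 * c := by
  intro K
  induction K with
  | zero => exact ⟨0, by simp⟩
  | succ n ih =>
    obtain ⟨c, hc⟩ := ih
    refine ⟨c + (n : A) + z * c, ?_⟩
    rw [pow_succ, hc]
    push_cast
    ring

lemma unipOrder (K : ℕ) (hK : 1 ≤ K) (hKA : (K : A) = 0) :
    ∀ L : ℕ, ∀ z : A, z ^ L = 0 → ∃ s : ℕ, 1 ≤ s ∧ (1 + z) ^ s = 1 := by
  intro L
  induction L using Nat.strong_induction_on with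
  | _ L ih =>
    intro z hz
    match L, ih, hz with
    | 0, ih, hz =>
      rw [pow_zero] at hz
      have h0 : ∀ w : A, w = 0 := fun w => by rw [← mul_one w, hz, mul_zero]
      exact ⟨1, le_rfl, by rw [h0 ((1 + z) ^ 1), h0 1]⟩
    | 1, ih, hz =>
      rw [pow_one] at hz
      exact ⟨1, le_rfl, by rw [hz, add_zero, pow_one]⟩
    | (L + 2), ih, hz =>
      obtain ⟨c, hc⟩ := binom_aux z K
      rw [hKA, zero_mul, add_zero] at hc
      have hz' : (z ^ 2 * c) ^ (L + 1) = 0 := by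
        rw [mul_pow, ← pow_mul, show 2 * (L + 1) = (L + 2) + L by ring, pow_add, hz,
          zero_mul, zero_mul]
      obtain ⟨s', hs1, hs⟩ := ih (L + 1) (by omega) (z ^ 2 * c) hz'
      refine ⟨K * s', Nat.one_le_iff_ne_zero.mpr (Nat.mul_ne_zero (by omega) (by omega)), ?_⟩
      rw [pow_mul, hc, hs]

/-- The main commutative lifting lemma. -/
lemma master (K k m : ℕ) (hK1 : 1 ≤ K) (hKA : (K : A) = 0) (hm : 2 ≤ m) (a : A)
    (hq : (a - a ^ m) ^ 2 ^ k = 0) :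
    ∃ p c : A, ∃ L : ℕ, 2 ≤ L ∧ p = p ^ L ∧ a - p = (a - a ^ m) * c := by
  obtain ⟨d, rfl⟩ : ∃ d, m = d + 2 := ⟨m - 2, by omega⟩
  set q := a - a ^ (d + 2) with hqdef
  have hfk : ((a ^ (d + 1)) ^ 2 - a ^ (d + 1)) ^ 2 ^ k = 0 := by
    have h1 : (a ^ (d + 1)) ^ 2 - a ^ (d + 1) = (-(a ^ d)) * q := by
      rw [hqdef]; ring
    rw [h1, mul_pow, hq, mul_zero]
  obtain ⟨e, c₀, he, hec⟩ := idemLift k (a ^ (d + 1)) hfk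
  have hec2 : e - a ^ (d + 1) = q * (-(a ^ d) * c₀) := by
    rw [hec]
    have h1 : (a ^ (d + 1)) ^ 2 - a ^ (d + 1) = (-(a ^ d)) * q := by rw [hqdef]; ring
    rw [h1]; ring
  have hepow : ∀ n : ℕ, e ^ (n + 1) = e := by
    intro n
    induction n with
    | zero => rw [pow_one]
    | succ n ih => rw [pow_succ, ih, ← sq, he]
  have hu : (a * e) ^ (d + 1) = e + q * (a ^ d * c₀ * e) := by
    rw [mul_pow, hepow d]
    linear_combination (-e) * hec2 + he
  have hzn : (q * (a ^ d * c₀ * e)) ^ 2 ^ k = 0 := by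
    rw [mul_pow, hq, zero_mul]
  obtain ⟨s, hs1, hs⟩ := unipOrder K hK1 hKA (2 ^ k) (q * (a ^ d * c₀ * e)) hzn
  have hes : (e + q * (a ^ d * c₀ * e)) ^ s = e := by
    have h1 : e + q * (a ^ d * c₀ * e) = e * (1 + q * (a ^ d * c₀ * e)) := by
      linear_combination (-(q * (a ^ d * c₀))) * he
    obtain ⟨s₁, rfl⟩ : ∃ t, s = t + 1 := ⟨s - 1, by omega⟩
    rw [h1, mul_pow, hs, mul_one, hepow]
  refine ⟨a * e, 1 - a * (-(a ^ d) * c₀), (d + 1) * s + 1, ?_, ?_, ?_⟩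
  · have h11 : 1 * 1 ≤ (d + 1) * s := Nat.mul_le_mul (by omega) hs1
    omega
  · rw [pow_succ, pow_mul, hu, hes]
    linear_combination (-a) * he
  · linear_combination (-a) * hec2 - hqdef

end CommMachine

/-- The lifting lemma transported into an arbitrary ring, producing a commuting potent. -/
lemma master_subring {S : Type*} [Ring S] (K k m : ℕ) (hK1 : 1 ≤ K) (hKS : (K : S) = 0)
    (hm : 2 ≤ m) (a : S) (hq : (a - a ^ m) ^ 2 ^ k = 0) :
    ∃ p c : S, IsPotent p ∧ a - p = (a - a ^ m) * c ∧ a * p = p * a := by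
  letI : CommRing (Subring.closure ({a} : Set S)) :=
    Subring.closureCommRingOfComm (fun x hx y hy => by
      rw [Set.mem_singleton_iff] at hx hy
      rw [hx, hy])
  let aA : Subring.closure ({a} : Set S) := ⟨a, Subring.subset_closure (Set.mem_singleton a)⟩
  have coe_pow : ∀ (x : Subring.closure ({a} : Set S)) (n : ℕ), ((x ^ n : _) : S) = (x : S) ^ n := by
    intro x n
    induction n with
    | zero => rw [pow_zero, pow_zero]; rfl
    | succ n ih => rw [pow_succ, pow_succ, ← ih]; rfl
  have coe_nat : ∀ n : ℕ, ((n : Subring.closure ({a} : Set S)) : S) = (n : S) := by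
    intro n
    induction n with
    | zero => rw [Nat.cast_zero, Nat.cast_zero]; rfl
    | succ n ih => rw [Nat.cast_succ, Nat.cast_succ, ← ih]; rfl
  have hKA : (K : Subring.closure ({a} : Set S)) = 0 := Subtype.ext (by rw [coe_nat]; exact hKS)
  have haA : ((aA - aA ^ m : _) : S) = a - a ^ m := by
    have h1 : ((aA - aA ^ m : _) : S) = (aA : S) - ((aA ^ m : _) : S) := rfl
    rw [h1, coe_pow]
  have hqA : (aA - aA ^ m) ^ 2 ^ k = 0 := Subtype.ext (by rw [coe_pow, haA]; exact hq)
  obtain ⟨pA, cA, L, hL2, hpot, heq⟩ := master K k m hK1 hKA hm aA hqA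
  refine ⟨(pA : S), (cA : S), ⟨L, hL2, ?_⟩, ?_, ?_⟩
  · have h := congrArg (Subtype.val) hpot
    rw [coe_pow] at h
    exact h
  · have h := congrArg (Subtype.val) heq
    have h1 : ((aA - pA : _) : S) = a - (pA : S) := rfl
    have h2 : (((aA - aA ^ m) * cA : _) : S) = ((aA - aA ^ m : _) : S) * (cA : S) := rfl
    rw [h1, h2, haA] at h
    exact h
  · exact congrArg (Subtype.val) (mul_comm aA pA)

/-- In a strongly periodic ring, `b - b ^ n` lies in the prime radical for some `n ≥ 2`. -/
lemma key_aux {R : Type*} [Ring R] (hR : StronglyPeriodicRing R) (b : R) :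
    ∃ n : ℕ, 2 ≤ n ∧ b - b ^ n ∈ primeRadical R := by
  obtain ⟨p, ⟨m, hm2, hpm⟩, hbp, hcomm⟩ := hR b
  refine ⟨m, hm2, ?_⟩
  have h1 : (∑ i ∈ Finset.range m, b ^ i * p ^ (m - 1 - i)) * (b - p) = b ^ m - p ^ m :=
    Commute.geom_sum₂_mul hcomm m
  have h2 : b - b ^ m = (b - p) - (∑ i ∈ Finset.range m, b ^ i * p ^ (m - 1 - i)) * (b - p) := by
    rw [h1, ← hpm]; abel
  rw [h2]
  exact (primeRadical R).sub_mem hbp ((primeRadical R).mul_mem_left _ _ hbp)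

theorem subring_stronglyPeriodic {R : Type*} [Ring R] (hR : StronglyPeriodicRing R)
    (S : Subring R) : StronglyPeriodicRing S := by
  -- a global torsion constant for `R` (and hence for `S`)
  obtain ⟨n₂, hn₂, h2⟩ := key_aux hR 2
  obtain ⟨k₂, hk₂⟩ := (snilp_of_mem_primeRadical h2).pow2
  have h4 : (4 : ℕ) ≤ 2 ^ n₂ := by
    calc (4 : ℕ) = 2 ^ 2 := rfl
    _ ≤ 2 ^ n₂ := Nat.pow_le_pow_right (by omega) hn₂
  have h2le : (2 : ℕ) ≤ 2 ^ n₂ := le_trans (by norm_num) h4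
  have hcast : ((2 ^ n₂ - 2 : ℕ) : R) = -((2 : R) - (2 : R) ^ n₂) := by
    rw [Nat.cast_sub h2le]
    push_cast
    abel
  have hKR : (((2 ^ n₂ - 2) ^ 2 ^ k₂ : ℕ) : R) = 0 := by
    rw [Nat.cast_pow, hcast, neg_pow, hk₂, mul_zero]
  have hKS : (((2 ^ n₂ - 2) ^ 2 ^ k₂ : ℕ) : S) = 0 := by
    apply Subtype.ext
    push_cast
    push_cast at hKR
    exact hKR
  have hK1 : 1 ≤ (2 ^ n₂ - 2) ^ 2 ^ k₂ := Nat.one_le_iff_ne_zero.mpr (pow_ne_zero _ (by omega))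
  intro a
  obtain ⟨m, hm2, hqm⟩ := key_aux hR (a : R)
  have hqcoe : (((a - a ^ m : S)) : R) = (a : R) - (a : R) ^ m := by push_cast; ring
  have hsn : SNilp (((a - a ^ m : S)) : R) :=
    snilp_of_mem_primeRadical (by rw [hqcoe]; exact hqm)
  have hqPS : (a - a ^ m : S) ∈ primeRadical S := mem_primeRadical_subring hsn
  obtain ⟨k, hk⟩ := hsn.pow2
  have hkS : (a - a ^ m : S) ^ 2 ^ k = 0 := by
    apply Subtype.ext
    push_cast
    push_cast at hk
    exact hk
  obtain ⟨p, c, hpot, heq, hcomm⟩ :=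
    master_subring ((2 ^ n₂ - 2) ^ 2 ^ k₂) k m hK1 hKS hm2 a hkS
  exact ⟨p, hpot, by rw [heq]; exact (primeRadical S).mul_mem_right _ c hqPS, hcomm⟩
end

section
/- Every generalized n-like ring R (a ring satisfying (ab)^n - ab^n - a^n b + ab = 0 for all a, b ∈ R, for a fixed n ≥ 2) is periodic; in fact, for every a ∈ R, (a - a^n)^2 = 0. -/
lemma aux_pow {R : Type*} [Ring R] (a x : R) (n : ℕ) (hax : a = a ^ n + x)
    (hxx : x * x = 0) (hc : x * a = a * x) :
    ∀ m : ℕ, a ^ (m + 1) = a ^ (n * (m + 1)) + ((m + 1 : ℕ) : R) * (a ^ (n * m) * x) := by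
  have hc' : Commute x a := hc
  have hcn : ∀ k : ℕ, x * a ^ k = a ^ k * x := fun k => (hc'.pow_right k).eq
  intro m
  induction m with
  | zero => simpa using hax
  | succ m ih =>
      have hA : a ^ (n*m) * (a ^ n * x) = a ^ (n*(m+1)) * x := by
        rw [← mul_assoc, ← pow_add, ← Nat.mul_succ]
      have hexp : n*(m+1) + n = n*(m+1+1) := by ring
      calc a ^ (m+1+1) = (a^(n*(m+1)) + ((m+1:ℕ):R) * (a^(n*m)*x)) * (a^n + x) := by
            rw [pow_succ, ih, ← hax]
        _ = a^(n*(m+1)) * a^n + a^(n*(m+1)) * x + ((m+1:ℕ):R) * (a^(n*m) * (x * a^n))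
              + ((m+1:ℕ):R) * (a^(n*m) * (x*x)) := by noncomm_ring
        _ = a^(n*(m+1+1)) + ((m+1+1:ℕ):R) * (a^(n*(m+1)) * x) := by
            rw [hcn n, hxx, mul_zero, mul_zero, add_zero, hA, ← pow_add, hexp]
            generalize a ^ (n*(m+1+1)) = X
            generalize a ^ (n*(m+1)) * x = Y
            push_cast
            noncomm_ring

theorem generalized_n_like_periodic (R : Type*) [Ring R] (n : ℕ) (hn : 2 ≤ n)
    (h : ∀ a b : R, (a * b) ^ n - a * b ^ n - a ^ n * b + a * b = 0) :
    (∀ a : R, (a - a ^ n) ^ 2 = 0) ∧ IsPeriodicRing R := by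
  have sq0 : ∀ a : R, (a - a ^ n) ^ 2 = 0 := by
    intro a
    have e : (a*a)^n = a^n * a^n := by rw [← pow_two, ← pow_mul, two_mul, pow_add]
    have key : (a - a^n)^2 = (a*a)^n - a*a^n - a^n*a + a*a := by
      rw [e]; noncomm_ring
    rw [key, h a a]
  refine ⟨sq0, ?_⟩
  intro a
  set k : ℕ := 2^n - 2 with hk
  have h2n : 2 ≤ 2^n := by calc 2 ≤ 2^1 := by norm_num
                               _ ≤ 2^n := Nat.pow_le_pow_right (by norm_num) (by omega)
  have hk2 : 2 ≤ k := by
    have : 4 ≤ 2^n := by calc 4 = 2^2 := by norm_num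
                              _ ≤ 2^n := Nat.pow_le_pow_right (by norm_num) hn
    omega
  set x : R := a - a ^ n with hx
  have hax : a = a ^ n + x := by rw [hx]; abel
  have hxx : x * x = 0 := by
    have := sq0 a
    rwa [pow_two] at this
  have hc : x * a = a * x := by
    rw [hx, sub_mul, mul_sub, ((Commute.refl a).pow_left n).eq]
  -- torsion: (2^n - 2) • x = 0
  have h2a := h 2 a
  have hmp : ((2:R) * a)^n = (2:R)^n * a^n := (Commute.ofNat_left 2 a).mul_pow n
  have hcast : ((k:ℕ):R) = (2:R)^n - 2 := by
    rw [hk]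
    push_cast [Nat.cast_sub h2n]
    norm_num
  have hkx : ((k:ℕ):R) * x = 0 := by
    rw [hcast, hx]
    have : ((2:R)^n - 2) * (a - a^n) = -((2*a)^n - 2*a^n - 2^n*a + 2*a) := by
      rw [hmp]; noncomm_ring
    rw [this, h2a, neg_zero]
  have hpow := aux_pow a x n hax hxx hc (k - 1)
  have hk1 : k - 1 + 1 = k := by omega
  rw [hk1] at hpow
  have hzero : ((k:ℕ):R) * (a ^ (n * (k-1)) * x) = 0 := by
    rw [← mul_assoc, (Nat.cast_commute k (a ^ (n*(k-1)))).eq, mul_assoc, hkx, mul_zero]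
  rw [hzero, add_zero] at hpow
  exact ⟨k, n * k, by nlinarith, hpow⟩
end

section
/- A ring R is J-clean (every element is the sum of an idempotent and an element of J(R)) if and only if R is J-clean-like and J(R) = { x ∈ R : 1 - x is a unit }. -/
/-- `x` lies in the Jacobson radical `J(R)` iff `1 - x * y` is a unit for every `y`. -/
def InJacobson {R : Type*} [Ring R] (x : R) : Prop :=
  ∀ y : R, IsUnit (1 - x * y)

/-- A ring is J-clean-like if every element is the sum of a potent element and an element
of the Jacobson radical. -/
def JCleanLikeRing (R : Type*) [Ring R] : Prop :=
  ∀ a : R, ∃ p : R, IsPotent p ∧ InJacobson (a - p)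

/-- A ring is J-clean if every element is the sum of an idempotent and an element of the
Jacobson radical. -/
def JCleanRing (R : Type*) [Ring R] : Prop :=
  ∀ a : R, ∃ e : R, IsIdempotentElem e ∧ InJacobson (a - e)

lemma inJacobson_neg {R : Type*} [Ring R] {x : R} (h : InJacobson x) : InJacobson (-x) := by
  intro y
  have := h (-y)
  simpa [neg_mul, mul_neg, sub_neg_eq_add] using this

lemma isUnit_sub_of_inJacobson {R : Type*} [Ring R] {u j : R} (hu : IsUnit u)
    (hj : InJacobson j) : IsUnit (u - j) := by
  obtain ⟨v, rfl⟩ := hu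
  have h := hj (↑v⁻¹)
  have key : (1 - j * ↑v⁻¹) * (v : R) = (v : R) - j := by
    rw [sub_mul, one_mul, mul_assoc]
    simp
  rw [← key]
  exact h.mul v.isUnit

theorem jClean_iff_jCleanLike (R : Type*) [Ring R] :
    JCleanRing R ↔
      (JCleanLikeRing R ∧ {x : R | InJacobson x} = {x : R | IsUnit (1 - x)}) := by
  constructor
  · intro h
    refine ⟨fun a => ?_, ?_⟩
    · obtain ⟨e, he, hj⟩ := h a
      exact ⟨e, ⟨2, le_refl 2, by rw [sq, he]⟩, hj⟩
    · ext x
      simp only [Set.mem_setOf_eq]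
      constructor
      · intro hx
        simpa using hx 1
      · intro hx
        obtain ⟨e, he, hj⟩ := h x
        have h1e : IsUnit (1 - e) := by
          have heq : (1 : R) - e = (1 - x) - -(x - e) := by abel
          rw [heq]
          exact isUnit_sub_of_inJacobson hx (inJacobson_neg hj)
        have he0 : e = 0 := by
          have h2 : (1 - e) * (1 - e) = (1 - e) * 1 := by
            rw [mul_one]; exact he.one_sub
          have h3 : (1 : R) - e = 1 := h1e.mul_left_cancel h2
          exact sub_eq_self.mp h3
        rw [he0, sub_zero] at hj
        exact hj
  · rintro ⟨hcl, hset⟩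
    have hJ : ∀ x : R, IsUnit (1 - x) → InJacobson x := by
      intro x hx
      exact (Set.ext_iff.mp hset x).mpr hx
    intro a
    obtain ⟨p, ⟨m, hm, hp⟩, hj⟩ := hcl a
    obtain ⟨k, rfl⟩ := Nat.exists_eq_add_of_le hm
    set e := p ^ (1 + k) with he_def
    set q := p ^ (1 + 2 * k) with hq_def
    have hred : ∀ j : ℕ, p ^ (1 + j + (1 + k)) = p ^ (1 + j) := by
      intro j
      have h1 : 1 + j + (1 + k) = (2 + k) + j := by ring
      have h2 : p ^ (2 + k) = p := hp.symm
      rw [h1, pow_add, h2, ← pow_succ', Nat.add_comm]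
    have hee : e * e = e := by
      rw [he_def, ← pow_add]
      exact hred k
    have hpe : p * e = p := by
      have : p * e = p ^ (1 + 0 + (1 + k)) := by
        rw [he_def, ← pow_succ']; ring_nf
      rw [this, hred 0, pow_one]
    have hep : e * p = p := by
      have : e * p = p ^ (1 + 0 + (1 + k)) := by
        rw [he_def, ← pow_succ]; ring_nf
      rw [this, hred 0, pow_one]
    have hpq : p * q = e := by
      have : p * q = p ^ (1 + k + (1 + k)) := by
        rw [hq_def, ← pow_succ']; ring_nf
      rw [this, hred k, ← he_def]
    have hqp : q * p = e := by
      have : q * p = p ^ (1 + k + (1 + k)) := by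
        rw [hq_def, ← pow_succ]; ring_nf
      rw [this, hred k, ← he_def]
    have heq : e * q = q := by
      have : e * q = p ^ (1 + 2 * k + (1 + k)) := by
        rw [he_def, hq_def, ← pow_add]; ring_nf
      rw [this, hred (2 * k), ← hq_def]
    have huv : (1 - e + p) * (1 - e + q) = 1 := by
      have expand : (1 - e + p) * (1 - e + q)
          = 1 - e + q - (e - e * e + e * q) + (p - p * e + p * q) := by noncomm_ring
      rw [expand, hee, heq, hpe, hpq]
      abel
    have hqe : q * e = q := by
      have : q * e = p ^ (1 + 2 * k + (1 + k)) := by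
        rw [he_def, hq_def, ← pow_add]
      rw [this, hred (2 * k), ← hq_def]
    have hvu : (1 - e + q) * (1 - e + p) = 1 := by
      have expand : (1 - e + q) * (1 - e + p)
          = 1 - e + p - (e - e * e + e * p) + (q - q * e + q * p) := by noncomm_ring
      rw [expand, hee, hep, hqe, hqp]
      abel
    have hunit : IsUnit (1 - e + p) := ⟨⟨1 - e + p, 1 - e + q, huv, hvu⟩, rfl⟩
    have h1 : InJacobson (e - p) := by
      apply hJ
      have : (1 : R) - (e - p) = 1 - e + p := by abel
      rw [this]; exact hunit
    have h2 : InJacobson (p - e) := by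
      have := inJacobson_neg h1
      simpa using this
    refine ⟨e, hee, ?_⟩
    apply hJ
    have heq2 : (1 : R) - (a - e) = (1 - (a - p)) - (p - e) := by abel
    rw [heq2]
    exact isUnit_sub_of_inJacobson (by simpa using hj 1) h2
end
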